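/- arXiv:1605.06093 — 6 statements merged into one kernel-verified Lean document; each statement's English description precedes it below -/
import Mathlib

section
/- Given a strictly convex quadrilateral with non-orthogonal diagonals, the target-square construction is invariant under cyclic shifts of the vertex labels: if the labels r1, r2, r3, r4 are shifted to r2, r3, r4, r1 (both orderings traversing the quadrilateral boundary in the same rotational direction) and the construction is repeated, the resulting four guidelines ℓ1, ℓ2, ℓ3, ℓ4 are the same lines (as a set, with ℓi still passing through ri), and hence the resulting target square is the same. -/
open EuclideanGeometry Real
open scoped RealInnerProductSpace

noncomputable section

abbrev Pt := EuclideanSpace ℝ (Fin 2)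

/-- Cross product of two planar vectors. -/
def cross2 (u v : Pt) : ℝ := u 0 * v 1 - u 1 * v 0

/-- Rotation of a planar vector by 90 degrees counterclockwise. -/
def rot90 (v : Pt) : Pt := WithLp.toLp 2 ![-(v 1), v 0]

/-- The line through `a` with direction vector `d`. -/
def lineDir (a d : Pt) : Set Pt := {p | cross2 (p - a) d = 0}

/-- The line through two points, as a set. -/
def lineThru (a b : Pt) : Set Pt := (affineSpan ℝ {a, b} : Set Pt)

/-- Strictly convex position in the given cyclic order. -/
def Convex4 (a b c d : Pt) : Prop :=
  (0 < cross2 (b-a) (c-b) ∧ 0 < cross2 (c-b) (d-c) ∧ 0 < cross2 (d-c) (a-d) ∧ 0 < cross2 (a-d) (b-a)) ∨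
  (cross2 (b-a) (c-b) < 0 ∧ cross2 (c-b) (d-c) < 0 ∧ cross2 (d-c) (a-d) < 0 ∧ cross2 (a-d) (b-a) < 0)

/-- `a b c d` in clockwise order: every consecutive triple has negative orientation. -/
def Clockwise4 (a b c d : Pt) : Prop :=
  cross2 (b-a) (c-b) < 0 ∧ cross2 (c-b) (d-c) < 0 ∧ cross2 (d-c) (a-d) < 0 ∧ cross2 (a-d) (b-a) < 0

/-- A (nondegenerate) square: four equal sides and four right angles. -/
def IsSquare4 (a b c d : Pt) : Prop :=
  a ≠ b ∧ dist a b = dist b c ∧ dist b c = dist c d ∧ dist c d = dist d a ∧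
  inner ℝ (b - a) (d - a) = (0:ℝ) ∧ inner ℝ (a - b) (c - b) = (0:ℝ) ∧
  inner ℝ (b - c) (d - c) = (0:ℝ) ∧ inner ℝ (c - d) (a - d) = (0:ℝ)

/-- `q` is the auxiliary point of the target-square construction for `r1 r2 r3 r4`:
`dist r1 q = dist r2 r4`, the lines `r1 q` and `r2 r4` are orthogonal, and the ray
from `r1` through `q` intersects the line `r2 r4`. -/
def IsQPoint (r1 r2 r3 r4 q : Pt) : Prop :=
  dist r1 q = dist r2 r4 ∧ inner ℝ (q - r1) (r4 - r2) = (0:ℝ) ∧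
  ∃ t : ℝ, 0 ≤ t ∧ r1 + t • (q - r1) ∈ lineDir r2 (r4 - r2)

/-- The set of midpoints of the edges of the square bounded by the four guidelines:
the vertices of the target square. -/
def targetVerts (l1 l2 l3 l4 : Set Pt) : Set Pt :=
  {m | (∃ a ∈ l1 ∩ l2, ∃ b ∈ l2 ∩ l3, m = midpoint ℝ a b) ∨
       (∃ a ∈ l2 ∩ l3, ∃ b ∈ l3 ∩ l4, m = midpoint ℝ a b) ∨
       (∃ a ∈ l3 ∩ l4, ∃ b ∈ l4 ∩ l1, m = midpoint ℝ a b) ∨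
       (∃ a ∈ l4 ∩ l1, ∃ b ∈ l1 ∩ l2, m = midpoint ℝ a b)}

lemma pt_ext' {x y : Pt} (h0 : x 0 = y 0) (h1 : x 1 = y 1) : x = y := by
  ext i; fin_cases i <;> assumption

lemma rot90_rot90' (v : Pt) : rot90 (rot90 v) = -v := by
  apply pt_ext' <;> simp [rot90]

lemma rot90_neg_rot90' (v : Pt) : rot90 (-(rot90 v)) = v := by
  apply pt_ext' <;> simp [rot90]

lemma lineDir_neg' (a d : Pt) : lineDir a (-d) = lineDir a d := by
  ext p
  simp only [lineDir, Set.mem_setOf_eq, cross2, PiLp.neg_apply]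
  constructor <;> intro h <;> linear_combination -h

lemma key_perp' (u w : Pt) (hlen : ‖u‖ = ‖w‖) (hperp : ⟪u, w⟫ = 0) :
    u = rot90 w ∨ u = -(rot90 w) := by
  have hl : u 0 * u 0 + u 1 * u 1 = w 0 * w 0 + w 1 * w 1 := by
    have : ‖u‖ ^ 2 = ‖w‖ ^ 2 := by rw [hlen]
    rw [EuclideanSpace.norm_eq, EuclideanSpace.norm_eq, Real.sq_sqrt (by positivity),
      Real.sq_sqrt (by positivity)] at this
    simp only [Fin.sum_univ_two, Real.norm_eq_abs, sq_abs] at this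
    linear_combination this
  have hp : u 0 * w 0 + u 1 * w 1 = 0 := by
    simp [PiLp.inner_apply, RCLike.inner_apply, Fin.sum_univ_two] at hperp; linarith
  have h : ((u 0 + w 1)^2 + (u 1 - w 0)^2) * ((u 0 - w 1)^2 + (u 1 + w 0)^2) = 0 := by
    have : ((u 0 + w 1)^2 + (u 1 - w 0)^2) * ((u 0 - w 1)^2 + (u 1 + w 0)^2)
        = (u 0 * u 0 + u 1 * u 1 - (w 0 * w 0 + w 1 * w 1))^2
          + (2 * (u 0 * w 0 + u 1 * w 1))^2 := by ring
    rw [this, hl, hp]; ring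
  rcases mul_eq_zero.mp h with h' | h'
  · left
    have h0 : u 0 = -(w 1) := by nlinarith [sq_nonneg (u 0 + w 1), sq_nonneg (u 1 - w 0)]
    have h1 : u 1 = w 0 := by nlinarith [sq_nonneg (u 0 + w 1), sq_nonneg (u 1 - w 0)]
    exact pt_ext' (by simp [rot90, h0]) (by simp [rot90, h1])
  · right
    have h0 : u 0 = w 1 := by nlinarith [sq_nonneg (u 0 - w 1), sq_nonneg (u 1 + w 0)]
    have h1 : u 1 = -(w 0) := by nlinarith [sq_nonneg (u 0 - w 1), sq_nonneg (u 1 + w 0)]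
    exact pt_ext' (by simp [rot90, h0]) (by simp [rot90, h1])

lemma key_perp_of_dist' (r1 r2 r4 q : Pt)
    (hlen : dist r1 q = dist r2 r4)
    (hperp : inner ℝ (q - r1) (r4 - r2) = (0:ℝ)) :
    q - r1 = rot90 (r4 - r2) ∨ q - r1 = -(rot90 (r4 - r2)) := by
  apply key_perp' _ _ _ hperp
  rw [← dist_eq_norm, ← dist_eq_norm, dist_comm q r1, dist_comm r4 r2]
  exact hlen

lemma qform_neg' (r1 r2 r4 q : Pt)
    (hlen : dist r1 q = dist r2 r4)
    (hperp : inner ℝ (q - r1) (r4 - r2) = (0:ℝ))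
    (hray : ∃ t : ℝ, 0 ≤ t ∧ r1 + t • (q - r1) ∈ lineDir r2 (r4 - r2))
    (hside : cross2 (r1 - r2) (r4 - r2) < 0) :
    q - r1 = -(rot90 (r4 - r2)) := by
  rcases key_perp_of_dist' r1 r2 r4 q hlen hperp with hu | hu
  · exfalso
    obtain ⟨t, ht, hmem⟩ := hray
    rw [hu] at hmem
    simp only [lineDir, Set.mem_setOf_eq, cross2, rot90, PiLp.sub_apply, PiLp.add_apply,
      PiLp.smul_apply, smul_eq_mul, PiLp.toLp_apply, Matrix.cons_val_zero, Matrix.cons_val_one,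
      Matrix.head_cons] at hmem
    simp only [cross2, PiLp.sub_apply] at hside
    nlinarith [mul_nonneg ht (add_nonneg (sq_nonneg (r4 0 - r2 0)) (sq_nonneg (r4 1 - r2 1))),
      sq_nonneg (r4 0 - r2 0), sq_nonneg (r4 1 - r2 1)]
  · exact hu

lemma qform_pos' (r1 r2 r4 q : Pt)
    (hlen : dist r1 q = dist r2 r4)
    (hperp : inner ℝ (q - r1) (r4 - r2) = (0:ℝ))
    (hray : ∃ t : ℝ, 0 ≤ t ∧ r1 + t • (q - r1) ∈ lineDir r2 (r4 - r2))
    (hside : 0 < cross2 (r1 - r2) (r4 - r2)) :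
    q - r1 = rot90 (r4 - r2) := by
  rcases key_perp_of_dist' r1 r2 r4 q hlen hperp with hu | hu
  · exact hu
  · exfalso
    obtain ⟨t, ht, hmem⟩ := hray
    rw [hu] at hmem
    simp only [lineDir, Set.mem_setOf_eq, cross2, rot90, PiLp.sub_apply, PiLp.add_apply,
      PiLp.smul_apply, PiLp.neg_apply, smul_eq_mul, PiLp.toLp_apply, Matrix.cons_val_zero, Matrix.cons_val_one,
      Matrix.head_cons] at hmem
    simp only [cross2, PiLp.sub_apply] at hside
    nlinarith [mul_nonneg ht (add_nonneg (sq_nonneg (r4 0 - r2 0)) (sq_nonneg (r4 1 - r2 1))),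
      sq_nonneg (r4 0 - r2 0), sq_nonneg (r4 1 - r2 1)]

set_option maxHeartbeats 2000000
/-- Invariance of the target-square construction under a cyclic shift of the labels:
performing the construction with labels `r2, r3, r4, r1` yields the same guidelines
(with the guideline through each `ri` unchanged) and the same target square. -/
theorem stmt1 (r1 r2 r3 r4 q q' : Pt)
    (hconv : Convex4 r1 r2 r3 r4)
    (hdiag : inner ℝ (r3 - r1) (r4 - r2) ≠ (0:ℝ))
    (hq : IsQPoint r1 r2 r3 r4 q) (hq3 : q ≠ r3)
    (hq' : IsQPoint r2 r3 r4 r1 q') (hq'4 : q' ≠ r4) :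
    lineDir r2 (q' - r4) = lineDir r2 (rot90 (q - r3)) ∧
    lineDir r3 (rot90 (q' - r4)) = lineDir r3 (q - r3) ∧
    lineDir r4 (q' - r4) = lineDir r4 (rot90 (q - r3)) ∧
    lineDir r1 (rot90 (q' - r4)) = lineDir r1 (q - r3) ∧
    targetVerts (lineDir r2 (q' - r4)) (lineDir r3 (rot90 (q' - r4)))
        (lineDir r4 (q' - r4)) (lineDir r1 (rot90 (q' - r4))) =
      targetVerts (lineDir r1 (q - r3)) (lineDir r2 (rot90 (q - r3)))
        (lineDir r3 (q - r3)) (lineDir r4 (rot90 (q - r3))) := by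
  obtain ⟨hd, hp, hr⟩ := hq
  obtain ⟨hd', hp', hr'⟩ := hq'
  have id1 : cross2 (r1 - r2) (r4 - r2) = -cross2 (r1 - r4) (r2 - r1) := by
    simp only [cross2, PiLp.sub_apply]; ring
  have id2 : cross2 (r2 - r3) (r1 - r3) = -cross2 (r2 - r1) (r3 - r2) := by
    simp only [cross2, PiLp.sub_apply]; ring
  have hmain : (q' - r4 = -(rot90 (q - r3)) ∧ rot90 (q' - r4) = q - r3) ∨
      (q' - r4 = rot90 (q - r3) ∧ rot90 (q' - r4) = -(q - r3)) := by
    rcases hconv with ⟨h1, h2, h3, h4⟩ | ⟨h1, h2, h3, h4⟩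
    · left
      have hside : cross2 (r1 - r2) (r4 - r2) < 0 := by rw [id1]; linarith
      have hside' : cross2 (r2 - r3) (r1 - r3) < 0 := by rw [id2]; linarith
      have hu := qform_neg' r1 r2 r4 q hd hp hr hside
      have hu' := qform_neg' r2 r3 r1 q' hd' hp' hr' hside'
      have a0 := congrArg (fun v : Pt => v 0) hu
      have a1 := congrArg (fun v : Pt => v 1) hu
      have b0 := congrArg (fun v : Pt => v 0) hu'
      have b1 := congrArg (fun v : Pt => v 1) hu'
      simp only [PiLp.sub_apply, PiLp.neg_apply, rot90, PiLp.toLp_apply, Matrix.cons_val_zero,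
        Matrix.cons_val_one, Matrix.head_cons] at a0 a1 b0 b1
      have hpar : q' - r4 = -(rot90 (q - r3)) := by
        apply pt_ext' <;>
          simp only [PiLp.sub_apply, PiLp.neg_apply, rot90, PiLp.toLp_apply, Matrix.cons_val_zero,
            Matrix.cons_val_one, Matrix.head_cons] <;> linarith
      refine ⟨hpar, ?_⟩
      rw [hpar]; exact rot90_neg_rot90' _
    · right
      have hside : 0 < cross2 (r1 - r2) (r4 - r2) := by rw [id1]; linarith
      have hside' : 0 < cross2 (r2 - r3) (r1 - r3) := by rw [id2]; linarith
      have hu := qform_pos' r1 r2 r4 q hd hp hr hside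
      have hu' := qform_pos' r2 r3 r1 q' hd' hp' hr' hside'
      have a0 := congrArg (fun v : Pt => v 0) hu
      have a1 := congrArg (fun v : Pt => v 1) hu
      have b0 := congrArg (fun v : Pt => v 0) hu'
      have b1 := congrArg (fun v : Pt => v 1) hu'
      simp only [PiLp.sub_apply, PiLp.neg_apply, rot90, PiLp.toLp_apply, Matrix.cons_val_zero,
        Matrix.cons_val_one, Matrix.head_cons] at a0 a1 b0 b1
      have hpar : q' - r4 = rot90 (q - r3) := by
        apply pt_ext' <;>
          simp only [PiLp.sub_apply, PiLp.neg_apply, rot90, PiLp.toLp_apply, Matrix.cons_val_zero,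
            Matrix.cons_val_one, Matrix.head_cons] <;> linarith
      refine ⟨hpar, ?_⟩
      rw [hpar]; exact rot90_rot90' _
  have e1 : lineDir r2 (q' - r4) = lineDir r2 (rot90 (q - r3)) := by
    rcases hmain with ⟨hpar, _⟩ | ⟨hpar, _⟩
    · rw [hpar, lineDir_neg']
    · rw [hpar]
  have e2 : lineDir r3 (rot90 (q' - r4)) = lineDir r3 (q - r3) := by
    rcases hmain with ⟨_, hpar⟩ | ⟨_, hpar⟩
    · rw [hpar]
    · rw [hpar, lineDir_neg']
  have e3 : lineDir r4 (q' - r4) = lineDir r4 (rot90 (q - r3)) := by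
    rcases hmain with ⟨hpar, _⟩ | ⟨hpar, _⟩
    · rw [hpar, lineDir_neg']
    · rw [hpar]
  have e4 : lineDir r1 (rot90 (q' - r4)) = lineDir r1 (q - r3) := by
    rcases hmain with ⟨_, hpar⟩ | ⟨_, hpar⟩
    · rw [hpar]
    · rw [hpar, lineDir_neg']
  refine ⟨e1, e2, e3, e4, ?_⟩
  rw [e1, e2, e3, e4]
  have hperm : ∀ p1 p2 p3 p4 : Prop, (p2 ∨ p3 ∨ p4 ∨ p1) ↔ (p1 ∨ p2 ∨ p3 ∨ p4) := by
    intros; tauto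
  ext m
  simp only [targetVerts, Set.mem_setOf_eq]
  exact hperm _ _ _ _

end
end

section
/- Given a strictly convex quadrilateral with non-orthogonal diagonals, the target-square construction is invariant under swapping the labels of the two vertices r2 and r4: performing the construction with labels r1, r4, r3, r2 yields the same guidelines and the same target square as with labels r1, r2, r3, r4. -/
open EuclideanGeometry Real
open scoped RealInnerProductSpace

noncomputable section

lemma rotCases (u0 u1 d0 d1 : ℝ) (hi : u0*d0 + u1*d1 = 0)
    (hn : u0^2+u1^2 = d0^2+d1^2) :
    (u0 = -d1 ∧ u1 = d0) ∨ (u0 = d1 ∧ u1 = -d0) := by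
  have key : ((u0+d1)^2+(u1-d0)^2) * ((u0-d1)^2+(u1+d0)^2) = 0 := by
    linear_combination (u0^2+u1^2-d0^2-d1^2) * hn + (4*u0*d0+4*u1*d1) * hi
  rcases mul_eq_zero.mp key with h | h
  · left; constructor <;> nlinarith [sq_nonneg (u0+d1), sq_nonneg (u1-d0)]
  · right; constructor <;> nlinarith [sq_nonneg (u0-d1), sq_nonneg (u1+d0)]

lemma targetVerts_swap_subset (l1 l2 l3 l4 : Set Pt) :
    targetVerts l1 l4 l3 l2 ⊆ targetVerts l1 l2 l3 l4 := by
  rintro m (⟨a,⟨h1,h2⟩,b,⟨h3,h4⟩,rfl⟩|⟨a,⟨h1,h2⟩,b,⟨h3,h4⟩,rfl⟩|⟨a,⟨h1,h2⟩,b,⟨h3,h4⟩,rfl⟩|⟨a,⟨h1,h2⟩,b,⟨h3,h4⟩,rfl⟩)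
  · exact Or.inr (Or.inr (Or.inl ⟨b, ⟨h4, h3⟩, a, ⟨h2, h1⟩, midpoint_comm a b⟩))
  · exact Or.inr (Or.inl ⟨b, ⟨h4, h3⟩, a, ⟨h2, h1⟩, midpoint_comm a b⟩)
  · exact Or.inl ⟨b, ⟨h4, h3⟩, a, ⟨h2, h1⟩, midpoint_comm a b⟩
  · exact Or.inr (Or.inr (Or.inr ⟨b, ⟨h4, h3⟩, a, ⟨h2, h1⟩, midpoint_comm a b⟩))

lemma targetVerts_swap (l1 l2 l3 l4 : Set Pt) :
    targetVerts l1 l4 l3 l2 = targetVerts l1 l2 l3 l4 :=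
  le_antisymm (targetVerts_swap_subset l1 l2 l3 l4) (targetVerts_swap_subset l1 l4 l3 l2)

set_option maxHeartbeats 1000000 in
/-- Invariance of the target-square construction under swapping the labels of `r2` and `r4`:
performing the construction with labels `r1, r4, r3, r2` yields the same guidelines and the
same target square as with labels `r1, r2, r3, r4`. -/
theorem stmt2 (r1 r2 r3 r4 q q' : Pt)
    (hconv : Convex4 r1 r2 r3 r4)
    (hdiag : inner ℝ (r3 - r1) (r4 - r2) ≠ (0:ℝ))
    (hq : IsQPoint r1 r2 r3 r4 q) (hq3 : q ≠ r3)
    (hq' : IsQPoint r1 r4 r3 r2 q') (hq'3 : q' ≠ r3) :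
    lineDir r1 (q' - r3) = lineDir r1 (q - r3) ∧
    lineDir r4 (rot90 (q' - r3)) = lineDir r4 (rot90 (q - r3)) ∧
    lineDir r3 (q' - r3) = lineDir r3 (q - r3) ∧
    lineDir r2 (rot90 (q' - r3)) = lineDir r2 (rot90 (q - r3)) ∧
    targetVerts (lineDir r1 (q' - r3)) (lineDir r4 (rot90 (q' - r3)))
        (lineDir r3 (q' - r3)) (lineDir r2 (rot90 (q' - r3))) =
      targetVerts (lineDir r1 (q - r3)) (lineDir r2 (rot90 (q - r3)))
        (lineDir r3 (q - r3)) (lineDir r4 (rot90 (q - r3))) := by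
  obtain ⟨h1, h2, t, ht, h3⟩ := hq
  obtain ⟨h1', h2', t', ht', h3'⟩ := hq'
  simp only [lineDir, Set.mem_setOf_eq, cross2, PiLp.add_apply, PiLp.smul_apply,
    PiLp.sub_apply, smul_eq_mul] at h3 h3'
  simp only [PiLp.inner_apply, RCLike.inner_apply, conj_trivial, Fin.sum_univ_two,
    PiLp.sub_apply] at h2 h2'
  have hd1 : (q 0 - r1 0)^2 + (q 1 - r1 1)^2 = (r4 0 - r2 0)^2 + (r4 1 - r2 1)^2 := by
    rw [EuclideanSpace.dist_eq, EuclideanSpace.dist_eq, Fin.sum_univ_two, Fin.sum_univ_two] at h1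
    have h := (Real.sqrt_inj (by positivity) (by positivity)).mp h1
    simp only [Real.dist_eq, sq_abs] at h
    linear_combination h
  have hd1' : (q' 0 - r1 0)^2 + (q' 1 - r1 1)^2 = (r4 0 - r2 0)^2 + (r4 1 - r2 1)^2 := by
    rw [EuclideanSpace.dist_eq, EuclideanSpace.dist_eq, Fin.sum_univ_two, Fin.sum_univ_two] at h1'
    have h := (Real.sqrt_inj (by positivity) (by positivity)).mp h1'
    simp only [Real.dist_eq, sq_abs] at h
    linear_combination h
  have hrot := rotCases (q 0 - r1 0) (q 1 - r1 1) (r4 0 - r2 0) (r4 1 - r2 1)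
    (by linear_combination h2) hd1
  have hrot' := rotCases (q' 0 - r1 0) (q' 1 - r1 1) (r4 0 - r2 0) (r4 1 - r2 1)
    (by linear_combination -h2') hd1'
  have hD : (0:ℝ) ≤ (r4 0 - r2 0)^2 + (r4 1 - r2 1)^2 := by positivity
  have hc : (r1 0 - r2 0)*(r4 1 - r2 1) - (r1 1 - r2 1)*(r4 0 - r2 0) ≠ 0 := by
    rcases hconv with ⟨_,_,_,h⟩|⟨_,_,_,h⟩ <;>
    · simp only [cross2, PiLp.sub_apply] at h
      intro h0
      have hid : (r1 0 - r4 0)*(r2 1 - r1 1) - (r1 1 - r4 1)*(r2 0 - r1 0)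
          = -((r1 0 - r2 0)*(r4 1 - r2 1) - (r1 1 - r2 1)*(r4 0 - r2 0)) := by ring
      linarith
  have hqq : q' = q := by
    have key : (q' 0 = q 0) ∧ (q' 1 = q 1) := by
      rcases hrot with ⟨e0, e1⟩ | ⟨e0, e1⟩ <;> rcases hrot' with ⟨f0, f1⟩ | ⟨f0, f1⟩
      · exact ⟨by linarith, by linarith⟩
      · exfalso
        have eq1 : (r1 0 - r2 0)*(r4 1 - r2 1) - (r1 1 - r2 1)*(r4 0 - r2 0)
            = t * ((r4 0 - r2 0)^2 + (r4 1 - r2 1)^2) := by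
          linear_combination h3 - t*(r4 1 - r2 1)*e0 + t*(r4 0 - r2 0)*e1
        have eq2 : (r1 0 - r2 0)*(r4 1 - r2 1) - (r1 1 - r2 1)*(r4 0 - r2 0)
            = -(t' * ((r4 0 - r2 0)^2 + (r4 1 - r2 1)^2)) := by
          linear_combination -h3' - t'*(r4 1 - r2 1)*f0 + t'*(r4 0 - r2 0)*f1
        exact hc (le_antisymm (by nlinarith [mul_nonneg ht' hD]) (by nlinarith [mul_nonneg ht hD]))
      · exfalso
        have eq1 : (r1 0 - r2 0)*(r4 1 - r2 1) - (r1 1 - r2 1)*(r4 0 - r2 0)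
            = -(t * ((r4 0 - r2 0)^2 + (r4 1 - r2 1)^2)) := by
          linear_combination h3 - t*(r4 1 - r2 1)*e0 + t*(r4 0 - r2 0)*e1
        have eq2 : (r1 0 - r2 0)*(r4 1 - r2 1) - (r1 1 - r2 1)*(r4 0 - r2 0)
            = t' * ((r4 0 - r2 0)^2 + (r4 1 - r2 1)^2) := by
          linear_combination -h3' - t'*(r4 1 - r2 1)*f0 + t'*(r4 0 - r2 0)*f1
        exact hc (le_antisymm (by nlinarith [mul_nonneg ht hD]) (by nlinarith [mul_nonneg ht' hD]))
      · exact ⟨by linarith, by linarith⟩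
    ext i
    fin_cases i
    · exact key.1
    · exact key.2
  refine ⟨by rw [hqq], by rw [hqq], by rw [hqq], by rw [hqq], ?_⟩
  rw [hqq]
  exact targetVerts_swap _ _ _ _

end
end

section
/- Given a strictly convex quadrilateral r1 r2 r3 r4 with non-orthogonal diagonals and its target square with targets p1, p2, p3, p4, no two of the four pathways (segments ri pi) intersect. -/
open EuclideanGeometry Real
open scoped RealInnerProductSpace

noncomputable section

theorem inner_coords (a b : Pt) : ⟪a, b⟫ = a 0 * b 0 + a 1 * b 1 := by
  simp [PiLp.inner_apply, Fin.sum_univ_two]; ring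

theorem dist_sq_coords (a b : Pt) : dist a b ^ 2 = (a 0 - b 0)^2 + (a 1 - b 1)^2 := by
  rw [EuclideanSpace.dist_eq, Real.sq_sqrt (by positivity)]
  simp [Fin.sum_univ_two, Real.dist_eq, sq_abs]

theorem seg_coords {a b x : Pt} (h : x ∈ segment ℝ a b) :
    ∃ u : ℝ, 0 ≤ u ∧ u ≤ 1 ∧ x 0 = (1-u) * a 0 + u * b 0 ∧ x 1 = (1-u) * a 1 + u * b 1 := by
  obtain ⟨s, t, hs, ht, hst, rfl⟩ := h
  have hs' : s = 1 - t := by linarith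
  subst hs'
  exact ⟨t, ht, by linarith, by simp, by simp⟩

theorem mid_coords (a b : Pt) :
    (midpoint ℝ a b) 0 = (a 0 + b 0)/2 ∧ (midpoint ℝ a b) 1 = (a 1 + b 1)/2 := by
  rw [midpoint_eq_smul_add]
  constructor <;> simp <;> ring

theorem between_mul {a b c : ℝ} {u : ℝ} (h0 : 0 ≤ u) (h1 : u ≤ 1)
    (h : c = (1-u)*a + u*b) : (c - a) * (c - b) ≤ 0 := by
  subst h
  nlinarith [mul_nonneg (mul_nonneg h0 (sub_nonneg.2 h1)) (sq_nonneg (a - b))]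

theorem coreP12 (x1 x2 x3 x4 y1 y2 y3 y4 D s : ℝ) (hD : 0 < D)
    (hs : s = x4 - x2) (hs0 : 0 < s)
    (h3 : y3 = y1 - s) (hx3 : x3 = x1 + (y4 - y2) - D)
    (c12 : 0 < (x2-x1)*(y3-y2)-(y2-y1)*(x3-x2))
    (c23 : 0 < (x3-x2)*(y4-y3)-(y3-y2)*(x4-x3))
    (c34 : 0 < (x4-x3)*(y1-y4)-(y4-y3)*(x1-x4))
    (c41 : 0 < (x1-x4)*(y2-y1)-(y1-y4)*(x2-x1)) :
    ¬((x2-x1)*(x2-x4) ≤ 0 ∧ (y1-y2)*(y1-y3) ≤ 0) := by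
  subst hs h3 hx3
  rintro ⟨hA, hB⟩
  have ha : 0 ≤ x2 - x1 := by nlinarith
  have hb : 0 ≤ y2 - y1 := by nlinarith
  have hub : 0 ≤ (y4 - y2) + (y2 - y1) := by nlinarith [mul_nonneg ha hb]
  nlinarith [mul_nonneg hb c34.le, mul_nonneg hub c12.le, mul_pos hs0 c41]

theorem helper23 (a b c12e c23e D s t : ℝ) (ha : 0 ≤ a) (hb : 0 ≤ b)
    (hD : 0 < D) (hs0 : 0 < s) (hc12 : 0 < c12e) (hc23 : 0 < c23e)
    (key : b * c23e + a * c12e + b * b * s + a * b * D + a * a * s = 0)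
    (key2 : c12e = b * (b - t - D) - a * s) : False := by
  have n1 : 0 ≤ b * c23e := mul_nonneg hb hc23.le
  have n2 : 0 ≤ a * c12e := mul_nonneg ha hc12.le
  have n3 : 0 ≤ b * b * s := mul_nonneg (mul_nonneg hb hb) hs0.le
  have n4 : 0 ≤ a * b * D := mul_nonneg (mul_nonneg ha hb) hD.le
  have n5 : 0 ≤ a * a * s := mul_nonneg (mul_nonneg ha ha) hs0.le
  have h1 : a * a * s ≤ 0 := by linarith
  have h2 : b * b * s ≤ 0 := by linarith
  have haa : a * a ≤ 0 := by nlinarith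
  have hbb : b * b ≤ 0 := by nlinarith
  have ha0 : a = 0 := by nlinarith [mul_self_nonneg a]
  have hb0 : b = 0 := by nlinarith [mul_self_nonneg b]
  rw [key2, ha0, hb0] at hc12
  linarith

theorem coreP23 (x1 x2 x3 x4 y1 y2 y3 y4 D s : ℝ) (hD : 0 < D)
    (hs : s = x4 - x2) (hs0 : 0 < s)
    (h3 : y3 = y1 - s) (hx3 : x3 = x1 + (y4 - y2) - D)
    (c12 : 0 < (x2-x1)*(y3-y2)-(y2-y1)*(x3-x2))
    (c23 : 0 < (x3-x2)*(y4-y3)-(y3-y2)*(x4-x3))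
    (c34 : 0 < (x4-x3)*(y1-y4)-(y4-y3)*(x1-x4))
    (c41 : 0 < (x1-x4)*(y2-y1)-(y1-y4)*(x2-x1)) :
    ¬((x2-x3)*(x2-x4) ≤ 0 ∧ (y3-y2)*(y3-y1) ≤ 0) := by
  rintro ⟨hA, hB⟩
  have ha : 0 ≤ x2 - x3 := by nlinarith
  have hb : 0 ≤ y3 - y2 := by nlinarith
  exact helper23 (x2 - x3) (y3 - y2)
    ((x2-x1)*(y3-y2)-(y2-y1)*(x3-x2)) ((x3-x2)*(y4-y3)-(y3-y2)*(x4-x3))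
    D s (y3 - y4) ha hb hD hs0 c12 c23
    (by subst hs h3 hx3; ring) (by subst hs h3 hx3; ring)

/-- All four adjacent-pair conclusions, for `0 < s`. -/
theorem coreS (x1 x2 x3 x4 y1 y2 y3 y4 D s : ℝ) (hD : 0 < D)
    (hs : s = x4 - x2) (hs0 : 0 < s)
    (h3 : y3 = y1 - s) (hx3 : x3 = x1 + (y4 - y2) - D)
    (c12 : 0 < (x2-x1)*(y3-y2)-(y2-y1)*(x3-x2))
    (c23 : 0 < (x3-x2)*(y4-y3)-(y3-y2)*(x4-x3))
    (c34 : 0 < (x4-x3)*(y1-y4)-(y4-y3)*(x1-x4))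
    (c41 : 0 < (x1-x4)*(y2-y1)-(y1-y4)*(x2-x1)) :
    ¬((x2-x1)*(x2-x4) ≤ 0 ∧ (y1-y2)*(y1-y3) ≤ 0) ∧
    ¬((x2-x3)*(x2-x4) ≤ 0 ∧ (y3-y2)*(y3-y1) ≤ 0) ∧
    ¬((x4-x3)*(x4-x2) ≤ 0 ∧ (y3-y4)*(y3-y1) ≤ 0) ∧
    ¬((x4-x1)*(x4-x2) ≤ 0 ∧ (y1-y4)*(y1-y3) ≤ 0) := by
  refine ⟨coreP12 x1 x2 x3 x4 y1 y2 y3 y4 D s hD hs hs0 h3 hx3 c12 c23 c34 c41,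
          coreP23 x1 x2 x3 x4 y1 y2 y3 y4 D s hD hs hs0 h3 hx3 c12 c23 c34 c41, ?_, ?_⟩
  · -- P34 via 180° rotation (negate both coords, shift indices by 2)
    have h := coreP12 (-x3) (-x4) (-x1) (-x2) (-y3) (-y4) (-y1) (-y2) D s hD
      (by linarith) hs0 (by linarith) (by linarith)
      (by linarith [c34]) (by linarith [c41]) (by linarith [c12]) (by linarith [c23])
    rintro ⟨hA, hB⟩; exact h ⟨by linarith [hA], by linarith [hB]⟩
  · -- P14 via 180° rotation
    have h := coreP23 (-x3) (-x4) (-x1) (-x2) (-y3) (-y4) (-y1) (-y2) D s hD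
      (by linarith) hs0 (by linarith) (by linarith)
      (by linarith [c34]) (by linarith [c41]) (by linarith [c12]) (by linarith [c23])
    rintro ⟨hA, hB⟩; exact h ⟨by linarith [hA], by linarith [hB]⟩

/-- All four adjacent-pair conclusions, for `s ≠ 0`. -/
theorem coreFull (x1 x2 x3 x4 y1 y2 y3 y4 D s : ℝ) (hD : 0 < D)
    (hs : s = x4 - x2) (hs0 : s ≠ 0)
    (h3 : y3 = y1 - s) (hx3 : x3 = x1 + (y4 - y2) - D)
    (c12 : 0 < (x2-x1)*(y3-y2)-(y2-y1)*(x3-x2))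
    (c23 : 0 < (x3-x2)*(y4-y3)-(y3-y2)*(x4-x3))
    (c34 : 0 < (x4-x3)*(y1-y4)-(y4-y3)*(x1-x4))
    (c41 : 0 < (x1-x4)*(y2-y1)-(y1-y4)*(x2-x1)) :
    ¬((x2-x1)*(x2-x4) ≤ 0 ∧ (y1-y2)*(y1-y3) ≤ 0) ∧
    ¬((x2-x3)*(x2-x4) ≤ 0 ∧ (y3-y2)*(y3-y1) ≤ 0) ∧
    ¬((x4-x3)*(x4-x2) ≤ 0 ∧ (y3-y4)*(y3-y1) ≤ 0) ∧
    ¬((x4-x1)*(x4-x2) ≤ 0 ∧ (y1-y4)*(y1-y3) ≤ 0) := by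
  rcases hs0.lt_or_gt with hneg | hpos
  · -- s < 0 : swap 2↔4 and negate y's
    have h := coreS x1 x4 x3 x2 (-y1) (-y4) (-y3) (-y2) D (-s) hD
      (by linarith) (by linarith) (by linarith) (by linarith)
      (by linarith [c34]) (by linarith [c23]) (by linarith [c12]) (by linarith [c41])
    obtain ⟨hP14, hP34, hP23, hP12⟩ := h
    refine ⟨?_, ?_, ?_, ?_⟩
    · rintro ⟨hA, hB⟩; exact hP12 ⟨by linarith [hA], by linarith [hB]⟩
    · rintro ⟨hA, hB⟩; exact hP23 ⟨by linarith [hA], by linarith [hB]⟩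
    · rintro ⟨hA, hB⟩; exact hP34 ⟨by linarith [hA], by linarith [hB]⟩
    · rintro ⟨hA, hB⟩; exact hP14 ⟨by linarith [hA], by linarith [hB]⟩
  · exact coreS x1 x2 x3 x4 y1 y2 y3 y4 D s hD hs hpos h3 hx3 c12 c23 c34 c41

theorem sqsum_zero {u v : ℝ} (h : u^2 + v^2 = 0) : u = 0 ∧ v = 0 := by
  constructor <;> nlinarith [sq_nonneg u, sq_nonneg v]

set_option maxHeartbeats 4000000 in
/-- Main scalar lemma: from the q-point construction, derive all needed
interval-avoidance facts in target-square coordinates. -/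
theorem coreMain (a1 b1 a2 b2 a3 b3 a4 b4 q0 q1 t : ℝ)
    (X1 X2 X3 X4 Y1 Y2 Y3 Y4 D : ℝ)
    (hX1 : X1 = a1*(q0-a3) + b1*(q1-b3)) (hX2 : X2 = a2*(q0-a3) + b2*(q1-b3))
    (hX3 : X3 = a3*(q0-a3) + b3*(q1-b3)) (hX4 : X4 = a4*(q0-a3) + b4*(q1-b3))
    (hY1 : Y1 = a1*(q1-b3) - b1*(q0-a3)) (hY2 : Y2 = a2*(q1-b3) - b2*(q0-a3))
    (hY3 : Y3 = a3*(q1-b3) - b3*(q0-a3)) (hY4 : Y4 = a4*(q1-b3) - b4*(q0-a3))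
    (hDd : D = (q0-a3)^2 + (q1-b3)^2)
    (hconv : (0 < (a2-a1)*(b3-b2)-(b2-b1)*(a3-a2) ∧ 0 < (a3-a2)*(b4-b3)-(b3-b2)*(a4-a3) ∧
              0 < (a4-a3)*(b1-b4)-(b4-b3)*(a1-a4) ∧ 0 < (a1-a4)*(b2-b1)-(b1-b4)*(a2-a1)) ∨
             ((a2-a1)*(b3-b2)-(b2-b1)*(a3-a2) < 0 ∧ (a3-a2)*(b4-b3)-(b3-b2)*(a4-a3) < 0 ∧
              (a4-a3)*(b1-b4)-(b4-b3)*(a1-a4) < 0 ∧ (a1-a4)*(b2-b1)-(b1-b4)*(a2-a1) < 0))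
    (hdiagS : (a3-a1)*(a4-a2) + (b3-b1)*(b4-b2) ≠ 0)
    (hdsq : (q0-a1)^2+(q1-b1)^2 = (a4-a2)^2+(b4-b2)^2)
    (hperp : (q0-a1)*(a4-a2) + (q1-b1)*(b4-b2) = 0)
    (ht : 0 ≤ t)
    (hray : (a1 + t*(q0-a1) - a2)*(b4-b2) - (b1 + t*(q1-b1) - b2)*(a4-a2) = 0)
    (hq3 : ¬(q0 = a3 ∧ q1 = b3)) :
    Y1 ≠ Y3 ∧ X2 ≠ X4 ∧
    ¬((X2-X1)*(X2-X4) ≤ 0 ∧ (Y1-Y2)*(Y1-Y3) ≤ 0) ∧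
    ¬((X2-X3)*(X2-X4) ≤ 0 ∧ (Y3-Y2)*(Y3-Y1) ≤ 0) ∧
    ¬((X4-X3)*(X4-X2) ≤ 0 ∧ (Y3-Y4)*(Y3-Y1) ≤ 0) ∧
    ¬((X4-X1)*(X4-X2) ≤ 0 ∧ (Y1-Y4)*(Y1-Y3) ≤ 0) := by
  subst hX1 hX2 hX3 hX4 hY1 hY2 hY3 hY4 hDd
  -- positivity of D
  have hD : 0 < (q0-a3)^2 + (q1-b3)^2 := by
    rcases lt_or_eq_of_le (by positivity : (0:ℝ) ≤ (q0-a3)^2 + (q1-b3)^2) with h | h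
    · exact h
    · obtain ⟨h0, h1⟩ := sqsum_zero h.symm
      exact absurd ⟨by linarith, by linarith⟩ hq3
  -- w ≠ 0
  have hw : 0 < (a4-a2)^2 + (b4-b2)^2 := by
    rcases lt_or_eq_of_le (by positivity : (0:ℝ) ≤ (a4-a2)^2 + (b4-b2)^2) with h | h
    · exact h
    · obtain ⟨h0, h1⟩ := sqsum_zero h.symm
      exact absurd (by linear_combination (a3-a1)*h0 + (b3-b1)*h1) hdiagS
  -- dichotomy for q - r1
  have hkey : (((q0-a1)+(b4-b2))^2 + ((q1-b1)-(a4-a2))^2) *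
      (((q0-a1)-(b4-b2))^2 + ((q1-b1)+(a4-a2))^2) = 0 := by
    linear_combination ((q0-a1)^2+(q1-b1)^2-(a4-a2)^2-(b4-b2)^2) * hdsq +
      (4*((q0-a1)*(a4-a2)+(q1-b1)*(b4-b2))) * hperp
  have hdich := mul_eq_zero.mp hkey
  -- s ≠ 0 will come case by case
  rcases hconv with ⟨c12, c23, c34, c41⟩ | ⟨c12, c23, c34, c41⟩
  · -- counterclockwise: rule out case 1 (u = -rot90 w)
    rcases hdich with h | h
    · obtain ⟨h0, h1⟩ := sqsum_zero h
      have hq0 : q0 = a1 - (b4-b2) := by linarith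
      have hq1 : q1 = b1 + (a4-a2) := by linarith
      subst hq0 hq1
      -- hray : -cross(r1-r2,w) relation ; cross(r1-r2,w) = -c41 > 0 impossible? check sign
      exfalso
      nlinarith [mul_nonneg ht hw.le, c41, hray]
    · obtain ⟨h0, h1⟩ := sqsum_zero h
      have hq0 : q0 = a1 + (b4-b2) := by linarith
      have hq1 : q1 = b1 - (a4-a2) := by linarith
      have hD2 := hD
      rw [hq0, hq1] at hD2
      have hs0' : (a4*(q0-a3) + b4*(q1-b3)) - (a2*(q0-a3) + b2*(q1-b3)) ≠ 0 := by
        intro h; apply hdiagS; rw [hq0, hq1] at h; linear_combination -h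
      have c12' : 0 < ((a2*(q0-a3) + b2*(q1-b3))-(a1*(q0-a3) + b1*(q1-b3)))*((-((a3*(q1-b3) - b3*(q0-a3))))-(-((a2*(q1-b3) - b2*(q0-a3)))))-((-((a2*(q1-b3) - b2*(q0-a3))))-(-((a1*(q1-b3) - b1*(q0-a3)))))*((a3*(q0-a3) + b3*(q1-b3))-(a2*(q0-a3) + b2*(q1-b3))) := by
        rw [hq0, hq1]
        linarith [mul_pos (show (0:ℝ) < ((a2-a1)*(b3-b2)-(b2-b1)*(a3-a2)) from by linarith) hD2]
      have c23' : 0 < ((a3*(q0-a3) + b3*(q1-b3))-(a2*(q0-a3) + b2*(q1-b3)))*((-((a4*(q1-b3) - b4*(q0-a3))))-(-((a3*(q1-b3) - b3*(q0-a3)))))-((-((a3*(q1-b3) - b3*(q0-a3))))-(-((a2*(q1-b3) - b2*(q0-a3)))))*((a4*(q0-a3) + b4*(q1-b3))-(a3*(q0-a3) + b3*(q1-b3))) := by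
        rw [hq0, hq1]
        linarith [mul_pos (show (0:ℝ) < ((a3-a2)*(b4-b3)-(b3-b2)*(a4-a3)) from by linarith) hD2]
      have c34' : 0 < ((a4*(q0-a3) + b4*(q1-b3))-(a3*(q0-a3) + b3*(q1-b3)))*((-((a1*(q1-b3) - b1*(q0-a3))))-(-((a4*(q1-b3) - b4*(q0-a3)))))-((-((a4*(q1-b3) - b4*(q0-a3))))-(-((a3*(q1-b3) - b3*(q0-a3)))))*((a1*(q0-a3) + b1*(q1-b3))-(a4*(q0-a3) + b4*(q1-b3))) := by
        rw [hq0, hq1]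
        linarith [mul_pos (show (0:ℝ) < ((a4-a3)*(b1-b4)-(b4-b3)*(a1-a4)) from by linarith) hD2]
      have c41' : 0 < ((a1*(q0-a3) + b1*(q1-b3))-(a4*(q0-a3) + b4*(q1-b3)))*((-((a2*(q1-b3) - b2*(q0-a3))))-(-((a1*(q1-b3) - b1*(q0-a3)))))-((-((a1*(q1-b3) - b1*(q0-a3))))-(-((a4*(q1-b3) - b4*(q0-a3)))))*((a2*(q0-a3) + b2*(q1-b3))-(a1*(q0-a3) + b1*(q1-b3))) := by
        rw [hq0, hq1]
        linarith [mul_pos (show (0:ℝ) < ((a1-a4)*(b2-b1)-(b1-b4)*(a2-a1)) from by linarith) hD2]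
      have h3' : (-((a3*(q1-b3) - b3*(q0-a3)))) = (-((a1*(q1-b3) - b1*(q0-a3)))) - ((a4*(q0-a3) + b4*(q1-b3)) - (a2*(q0-a3) + b2*(q1-b3))) := by rw [hq0, hq1]; ring
      have hx3' : (a3*(q0-a3) + b3*(q1-b3)) = (a1*(q0-a3) + b1*(q1-b3)) + ((-((a4*(q1-b3) - b4*(q0-a3)))) - (-((a2*(q1-b3) - b2*(q0-a3))))) - ((q0-a3)^2 + (q1-b3)^2) := by rw [hq0, hq1]; ring
      obtain ⟨P12, P23, P34, P14⟩ := coreFull (a1*(q0-a3) + b1*(q1-b3)) (a2*(q0-a3) + b2*(q1-b3)) (a3*(q0-a3) + b3*(q1-b3)) (a4*(q0-a3) + b4*(q1-b3)) (-((a1*(q1-b3) - b1*(q0-a3)))) (-((a2*(q1-b3) - b2*(q0-a3)))) (-((a3*(q1-b3) - b3*(q0-a3)))) (-((a4*(q1-b3) - b4*(q0-a3)))) ((q0-a3)^2 + (q1-b3)^2) ((a4*(q0-a3) + b4*(q1-b3)) - (a2*(q0-a3) + b2*(q1-b3))) hD rfl hs0' h3' hx3' c12' c23' c34' c41'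
      refine ⟨?_, ?_, ?_, ?_, ?_, ?_⟩
      · intro h; apply hs0'; linarith [h3', h]
      · intro h; apply hs0'; linarith [h]
      · rintro ⟨hA, hB⟩; exact P12 ⟨hA, by linarith [hB]⟩
      · rintro ⟨hA, hB⟩; exact P23 ⟨hA, by linarith [hB]⟩
      · rintro ⟨hA, hB⟩; exact P34 ⟨hA, by linarith [hB]⟩
      · rintro ⟨hA, hB⟩; exact P14 ⟨hA, by linarith [hB]⟩
  · -- clockwise: rule out case 2
    rcases hdich with h | h
    · obtain ⟨h0, h1⟩ := sqsum_zero h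
      have hq0 : q0 = a1 - (b4-b2) := by linarith
      have hq1 : q1 = b1 + (a4-a2) := by linarith

      have hD2 := hD
      rw [hq0, hq1] at hD2
      have hs0' : (a4*(q0-a3) + b4*(q1-b3)) - (a2*(q0-a3) + b2*(q1-b3)) ≠ 0 := by
        intro h; apply hdiagS; rw [hq0, hq1] at h; linear_combination -h
      have c12' : 0 < ((a2*(q0-a3) + b2*(q1-b3))-(a1*(q0-a3) + b1*(q1-b3)))*((a3*(q1-b3) - b3*(q0-a3))-(a2*(q1-b3) - b2*(q0-a3)))-((a2*(q1-b3) - b2*(q0-a3))-(a1*(q1-b3) - b1*(q0-a3)))*((a3*(q0-a3) + b3*(q1-b3))-(a2*(q0-a3) + b2*(q1-b3))) := by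
        rw [hq0, hq1]
        linarith [mul_pos (show (0:ℝ) < -((a2-a1)*(b3-b2)-(b2-b1)*(a3-a2)) from by linarith) hD2]
      have c23' : 0 < ((a3*(q0-a3) + b3*(q1-b3))-(a2*(q0-a3) + b2*(q1-b3)))*((a4*(q1-b3) - b4*(q0-a3))-(a3*(q1-b3) - b3*(q0-a3)))-((a3*(q1-b3) - b3*(q0-a3))-(a2*(q1-b3) - b2*(q0-a3)))*((a4*(q0-a3) + b4*(q1-b3))-(a3*(q0-a3) + b3*(q1-b3))) := by
        rw [hq0, hq1]
        linarith [mul_pos (show (0:ℝ) < -((a3-a2)*(b4-b3)-(b3-b2)*(a4-a3)) from by linarith) hD2]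
      have c34' : 0 < ((a4*(q0-a3) + b4*(q1-b3))-(a3*(q0-a3) + b3*(q1-b3)))*((a1*(q1-b3) - b1*(q0-a3))-(a4*(q1-b3) - b4*(q0-a3)))-((a4*(q1-b3) - b4*(q0-a3))-(a3*(q1-b3) - b3*(q0-a3)))*((a1*(q0-a3) + b1*(q1-b3))-(a4*(q0-a3) + b4*(q1-b3))) := by
        rw [hq0, hq1]
        linarith [mul_pos (show (0:ℝ) < -((a4-a3)*(b1-b4)-(b4-b3)*(a1-a4)) from by linarith) hD2]
      have c41' : 0 < ((a1*(q0-a3) + b1*(q1-b3))-(a4*(q0-a3) + b4*(q1-b3)))*((a2*(q1-b3) - b2*(q0-a3))-(a1*(q1-b3) - b1*(q0-a3)))-((a1*(q1-b3) - b1*(q0-a3))-(a4*(q1-b3) - b4*(q0-a3)))*((a2*(q0-a3) + b2*(q1-b3))-(a1*(q0-a3) + b1*(q1-b3))) := by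
        rw [hq0, hq1]
        linarith [mul_pos (show (0:ℝ) < -((a1-a4)*(b2-b1)-(b1-b4)*(a2-a1)) from by linarith) hD2]
      have h3' : (a3*(q1-b3) - b3*(q0-a3)) = (a1*(q1-b3) - b1*(q0-a3)) - ((a4*(q0-a3) + b4*(q1-b3)) - (a2*(q0-a3) + b2*(q1-b3))) := by rw [hq0, hq1]; ring
      have hx3' : (a3*(q0-a3) + b3*(q1-b3)) = (a1*(q0-a3) + b1*(q1-b3)) + ((a4*(q1-b3) - b4*(q0-a3)) - (a2*(q1-b3) - b2*(q0-a3))) - ((q0-a3)^2 + (q1-b3)^2) := by rw [hq0, hq1]; ring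
      obtain ⟨P12, P23, P34, P14⟩ := coreFull (a1*(q0-a3) + b1*(q1-b3)) (a2*(q0-a3) + b2*(q1-b3)) (a3*(q0-a3) + b3*(q1-b3)) (a4*(q0-a3) + b4*(q1-b3)) (a1*(q1-b3) - b1*(q0-a3)) (a2*(q1-b3) - b2*(q0-a3)) (a3*(q1-b3) - b3*(q0-a3)) (a4*(q1-b3) - b4*(q0-a3)) ((q0-a3)^2 + (q1-b3)^2) ((a4*(q0-a3) + b4*(q1-b3)) - (a2*(q0-a3) + b2*(q1-b3))) hD rfl hs0' h3' hx3' c12' c23' c34' c41'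
      refine ⟨?_, ?_, ?_, ?_, ?_, ?_⟩
      · intro h; apply hs0'; linarith [h3', h]
      · intro h; apply hs0'; linarith [h]
      · rintro ⟨hA, hB⟩; exact P12 ⟨hA, by linarith [hB]⟩
      · rintro ⟨hA, hB⟩; exact P23 ⟨hA, by linarith [hB]⟩
      · rintro ⟨hA, hB⟩; exact P34 ⟨hA, by linarith [hB]⟩
      · rintro ⟨hA, hB⟩; exact P14 ⟨hA, by linarith [hB]⟩
    · obtain ⟨h0, h1⟩ := sqsum_zero h
      have hq0 : q0 = a1 + (b4-b2) := by linarith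
      have hq1 : q1 = b1 - (a4-a2) := by linarith
      subst hq0 hq1
      exfalso
      nlinarith [mul_nonneg ht hw.le, c41, hray]

set_option maxHeartbeats 4000000 in
/-- No two robots have intersecting pathways. -/
theorem stmt5
    (r1 r2 r3 r4 q a12 a23 a34 a41 : Pt)
    (hconv : Convex4 r1 r2 r3 r4)
    (hdiag : inner ℝ (r3 - r1) (r4 - r2) ≠ (0:ℝ))
    (hq : IsQPoint r1 r2 r3 r4 q) (hq3 : q ≠ r3)
    (ha12 : a12 ∈ lineDir r1 (q - r3) ∩ lineDir r2 (rot90 (q - r3)))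
    (ha23 : a23 ∈ lineDir r2 (rot90 (q - r3)) ∩ lineDir r3 (q - r3))
    (ha34 : a34 ∈ lineDir r3 (q - r3) ∩ lineDir r4 (rot90 (q - r3)))
    (ha41 : a41 ∈ lineDir r4 (rot90 (q - r3)) ∩ lineDir r1 (q - r3))
    (p1 p2 p3 p4 : Pt)
    (hp1 : p1 = midpoint ℝ a41 a12) (hp2 : p2 = midpoint ℝ a12 a23)
    (hp3 : p3 = midpoint ℝ a23 a34) (hp4 : p4 = midpoint ℝ a34 a41)
 :
    Disjoint (segment ℝ r1 p1) (segment ℝ r2 p2) ∧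
    Disjoint (segment ℝ r1 p1) (segment ℝ r3 p3) ∧
    Disjoint (segment ℝ r1 p1) (segment ℝ r4 p4) ∧
    Disjoint (segment ℝ r2 p2) (segment ℝ r3 p3) ∧
    Disjoint (segment ℝ r2 p2) (segment ℝ r4 p4) ∧
    Disjoint (segment ℝ r3 p3) (segment ℝ r4 p4) := by
  obtain ⟨hdist, hperp0, t, ht, hray0⟩ := hq
  have La12r1 : (a12 0 - r1 0) * (q 1 - r3 1) - (a12 1 - r1 1) * (q 0 - r3 0) = 0 := by
    have h := ha12.1
    simp only [lineDir, Set.mem_setOf_eq, cross2] at h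
    simp at h; linarith [h]
  have La12r2 : (a12 0 - r2 0) * (q 0 - r3 0) + (a12 1 - r2 1) * (q 1 - r3 1) = 0 := by
    have h := ha12.2
    simp only [lineDir, Set.mem_setOf_eq, cross2, rot90] at h
    simp at h; linarith [h]
  have La23r2 : (a23 0 - r2 0) * (q 0 - r3 0) + (a23 1 - r2 1) * (q 1 - r3 1) = 0 := by
    have h := ha23.1
    simp only [lineDir, Set.mem_setOf_eq, cross2, rot90] at h
    simp at h; linarith [h]
  have La23r3 : (a23 0 - r3 0) * (q 1 - r3 1) - (a23 1 - r3 1) * (q 0 - r3 0) = 0 := by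
    have h := ha23.2
    simp only [lineDir, Set.mem_setOf_eq, cross2] at h
    simp at h; linarith [h]
  have La34r3 : (a34 0 - r3 0) * (q 1 - r3 1) - (a34 1 - r3 1) * (q 0 - r3 0) = 0 := by
    have h := ha34.1
    simp only [lineDir, Set.mem_setOf_eq, cross2] at h
    simp at h; linarith [h]
  have La34r4 : (a34 0 - r4 0) * (q 0 - r3 0) + (a34 1 - r4 1) * (q 1 - r3 1) = 0 := by
    have h := ha34.2
    simp only [lineDir, Set.mem_setOf_eq, cross2, rot90] at h
    simp at h; linarith [h]
  have La41r4 : (a41 0 - r4 0) * (q 0 - r3 0) + (a41 1 - r4 1) * (q 1 - r3 1) = 0 := by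
    have h := ha41.1
    simp only [lineDir, Set.mem_setOf_eq, cross2, rot90] at h
    simp at h; linarith [h]
  have La41r1 : (a41 0 - r1 0) * (q 1 - r3 1) - (a41 1 - r1 1) * (q 0 - r3 0) = 0 := by
    have h := ha41.2
    simp only [lineDir, Set.mem_setOf_eq, cross2] at h
    simp at h; linarith [h]
  have Ga12r1 : a12 0 * (q 1 - r3 1) - a12 1 * (q 0 - r3 0) = r1 0 * (q 1 - r3 1) - r1 1 * (q 0 - r3 0) := by linarith [La12r1]
  have Fa12r2 : a12 0 * (q 0 - r3 0) + a12 1 * (q 1 - r3 1) = r2 0 * (q 0 - r3 0) + r2 1 * (q 1 - r3 1) := by linarith [La12r2]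
  have Fa23r2 : a23 0 * (q 0 - r3 0) + a23 1 * (q 1 - r3 1) = r2 0 * (q 0 - r3 0) + r2 1 * (q 1 - r3 1) := by linarith [La23r2]
  have Ga23r3 : a23 0 * (q 1 - r3 1) - a23 1 * (q 0 - r3 0) = r3 0 * (q 1 - r3 1) - r3 1 * (q 0 - r3 0) := by linarith [La23r3]
  have Ga34r3 : a34 0 * (q 1 - r3 1) - a34 1 * (q 0 - r3 0) = r3 0 * (q 1 - r3 1) - r3 1 * (q 0 - r3 0) := by linarith [La34r3]
  have Fa34r4 : a34 0 * (q 0 - r3 0) + a34 1 * (q 1 - r3 1) = r4 0 * (q 0 - r3 0) + r4 1 * (q 1 - r3 1) := by linarith [La34r4]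
  have Fa41r4 : a41 0 * (q 0 - r3 0) + a41 1 * (q 1 - r3 1) = r4 0 * (q 0 - r3 0) + r4 1 * (q 1 - r3 1) := by linarith [La41r4]
  have Ga41r1 : a41 0 * (q 1 - r3 1) - a41 1 * (q 0 - r3 0) = r1 0 * (q 1 - r3 1) - r1 1 * (q 0 - r3 0) := by linarith [La41r1]
  have p1c0 : p1 0 = (a41 0 + a12 0)/2 := by rw [hp1]; exact (mid_coords _ _).1
  have p1c1 : p1 1 = (a41 1 + a12 1)/2 := by rw [hp1]; exact (mid_coords _ _).2
  have p2c0 : p2 0 = (a12 0 + a23 0)/2 := by rw [hp2]; exact (mid_coords _ _).1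
  have p2c1 : p2 1 = (a12 1 + a23 1)/2 := by rw [hp2]; exact (mid_coords _ _).2
  have p3c0 : p3 0 = (a23 0 + a34 0)/2 := by rw [hp3]; exact (mid_coords _ _).1
  have p3c1 : p3 1 = (a23 1 + a34 1)/2 := by rw [hp3]; exact (mid_coords _ _).2
  have p4c0 : p4 0 = (a34 0 + a41 0)/2 := by rw [hp4]; exact (mid_coords _ _).1
  have p4c1 : p4 1 = (a34 1 + a41 1)/2 := by rw [hp4]; exact (mid_coords _ _).2
  have Fp1 : p1 0 * (q 0 - r3 0) + p1 1 * (q 1 - r3 1) = (r4 0 * (q 0 - r3 0) + r4 1 * (q 1 - r3 1) + (r2 0 * (q 0 - r3 0) + r2 1 * (q 1 - r3 1)))/2 := by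
    linear_combination (q 0 - r3 0) * p1c0 + (q 1 - r3 1) * p1c1 + (1/2) * Fa41r4 + (1/2) * Fa12r2
  have Gp1 : p1 0 * (q 1 - r3 1) - p1 1 * (q 0 - r3 0) = r1 0 * (q 1 - r3 1) - r1 1 * (q 0 - r3 0) := by
    linear_combination (q 1 - r3 1) * p1c0 - (q 0 - r3 0) * p1c1 + (1/2) * Ga41r1 + (1/2) * Ga12r1
  have Fp2 : p2 0 * (q 0 - r3 0) + p2 1 * (q 1 - r3 1) = r2 0 * (q 0 - r3 0) + r2 1 * (q 1 - r3 1) := by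
    linear_combination (q 0 - r3 0) * p2c0 + (q 1 - r3 1) * p2c1 + (1/2) * Fa12r2 + (1/2) * Fa23r2
  have Gp2 : p2 0 * (q 1 - r3 1) - p2 1 * (q 0 - r3 0) = (r1 0 * (q 1 - r3 1) - r1 1 * (q 0 - r3 0) + (r3 0 * (q 1 - r3 1) - r3 1 * (q 0 - r3 0)))/2 := by
    linear_combination (q 1 - r3 1) * p2c0 - (q 0 - r3 0) * p2c1 + (1/2) * Ga12r1 + (1/2) * Ga23r3
  have Fp3 : p3 0 * (q 0 - r3 0) + p3 1 * (q 1 - r3 1) = (r2 0 * (q 0 - r3 0) + r2 1 * (q 1 - r3 1) + (r4 0 * (q 0 - r3 0) + r4 1 * (q 1 - r3 1)))/2 := by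
    linear_combination (q 0 - r3 0) * p3c0 + (q 1 - r3 1) * p3c1 + (1/2) * Fa23r2 + (1/2) * Fa34r4
  have Gp3 : p3 0 * (q 1 - r3 1) - p3 1 * (q 0 - r3 0) = r3 0 * (q 1 - r3 1) - r3 1 * (q 0 - r3 0) := by
    linear_combination (q 1 - r3 1) * p3c0 - (q 0 - r3 0) * p3c1 + (1/2) * Ga23r3 + (1/2) * Ga34r3
  have Fp4 : p4 0 * (q 0 - r3 0) + p4 1 * (q 1 - r3 1) = r4 0 * (q 0 - r3 0) + r4 1 * (q 1 - r3 1) := by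
    linear_combination (q 0 - r3 0) * p4c0 + (q 1 - r3 1) * p4c1 + (1/2) * Fa34r4 + (1/2) * Fa41r4
  have Gp4 : p4 0 * (q 1 - r3 1) - p4 1 * (q 0 - r3 0) = (r3 0 * (q 1 - r3 1) - r3 1 * (q 0 - r3 0) + (r1 0 * (q 1 - r3 1) - r1 1 * (q 0 - r3 0)))/2 := by
    linear_combination (q 1 - r3 1) * p4c0 - (q 0 - r3 0) * p4c1 + (1/2) * Ga34r3 + (1/2) * Ga41r1
  have hdsq' : (q 0 - r1 0)^2 + (q 1 - r1 1)^2 = (r4 0 - r2 0)^2 + (r4 1 - r2 1)^2 := by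
    have h : dist r1 q ^ 2 = dist r2 r4 ^ 2 := by rw [hdist]
    rw [dist_sq_coords, dist_sq_coords] at h; linarith [h]
  have hperp' : (q 0 - r1 0)*(r4 0 - r2 0) + (q 1 - r1 1)*(r4 1 - r2 1) = 0 := by
    rw [inner_coords] at hperp0; simp at hperp0; linarith [hperp0]
  have hray' : (r1 0 + t*(q 0 - r1 0) - r2 0)*(r4 1 - r2 1) - (r1 1 + t*(q 1 - r1 1) - r2 1)*(r4 0 - r2 0) = 0 := by
    have h := hray0
    simp only [lineDir, Set.mem_setOf_eq, cross2] at h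
    simp at h; linarith [h]
  have hdiag' : (r3 0 - r1 0)*(r4 0 - r2 0) + (r3 1 - r1 1)*(r4 1 - r2 1) ≠ 0 := by
    intro h; apply hdiag; rw [inner_coords]; simp; linarith [h]
  have hq3' : ¬(q 0 = r3 0 ∧ q 1 = r3 1) := by
    rintro ⟨h0, h1⟩; apply hq3; ext i; fin_cases i <;> assumption
  have hconv' : (0 < (r2 0-r1 0)*(r3 1-r2 1)-(r2 1-r1 1)*(r3 0-r2 0) ∧ 0 < (r3 0-r2 0)*(r4 1-r3 1)-(r3 1-r2 1)*(r4 0-r3 0) ∧ 0 < (r4 0-r3 0)*(r1 1-r4 1)-(r4 1-r3 1)*(r1 0-r4 0) ∧ 0 < (r1 0-r4 0)*(r2 1-r1 1)-(r1 1-r4 1)*(r2 0-r1 0)) ∨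
      ((r2 0-r1 0)*(r3 1-r2 1)-(r2 1-r1 1)*(r3 0-r2 0) < 0 ∧ (r3 0-r2 0)*(r4 1-r3 1)-(r3 1-r2 1)*(r4 0-r3 0) < 0 ∧ (r4 0-r3 0)*(r1 1-r4 1)-(r4 1-r3 1)*(r1 0-r4 0) < 0 ∧ (r1 0-r4 0)*(r2 1-r1 1)-(r1 1-r4 1)*(r2 0-r1 0) < 0) := by
    have hc := hconv
    simp only [Convex4, cross2] at hc
    simp at hc
    rcases hc with ⟨h1, h2, h3, h4⟩ | ⟨h1, h2, h3, h4⟩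
    · exact Or.inl ⟨by linarith [h1], by linarith [h2], by linarith [h3], by linarith [h4]⟩
    · exact Or.inr ⟨by linarith [h1], by linarith [h2], by linarith [h3], by linarith [h4]⟩
  obtain ⟨hY13, hX24, P12, P23, P34, P14⟩ :=
    coreMain (r1 0) (r1 1) (r2 0) (r2 1) (r3 0) (r3 1) (r4 0) (r4 1) (q 0) (q 1) t
      _ _ _ _ _ _ _ _ _ rfl rfl rfl rfl rfl rfl rfl rfl rfl hconv' hdiag' hdsq' hperp' ht hray' hq3'
  refine ⟨?_, ?_, ?_, ?_, ?_, ?_⟩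
  · refine Set.disjoint_left.mpr ?_
    intro x hxA hxB
    obtain ⟨u, hu0, hu1, hA0, hA1⟩ := seg_coords hxA
    obtain ⟨v, hv0, hv1, hB0, hB1⟩ := seg_coords hxB
    have Gx1 : x 0 * (q 1 - r3 1) - x 1 * (q 0 - r3 0) = r1 0 * (q 1 - r3 1) - r1 1 * (q 0 - r3 0) := by
      linear_combination (q 1 - r3 1) * hA0 - (q 0 - r3 0) * hA1 + u * Gp1
    have Fx2 : x 0 * (q 0 - r3 0) + x 1 * (q 1 - r3 1) = r2 0 * (q 0 - r3 0) + r2 1 * (q 1 - r3 1) := by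
      linear_combination (q 0 - r3 0) * hB0 + (q 1 - r3 1) * hB1 + v * Fp2
    have hcF : r2 0 * (q 0 - r3 0) + r2 1 * (q 1 - r3 1) = (1-u)*(r1 0 * (q 0 - r3 0) + r1 1 * (q 1 - r3 1)) + u*((r4 0 * (q 0 - r3 0) + r4 1 * (q 1 - r3 1) + (r2 0 * (q 0 - r3 0) + r2 1 * (q 1 - r3 1)))/2) := by
      linear_combination (q 0 - r3 0) * hA0 + (q 1 - r3 1) * hA1 + u * Fp1 - Fx2
    have hcG : r1 0 * (q 1 - r3 1) - r1 1 * (q 0 - r3 0) = (1-v)*(r2 0 * (q 1 - r3 1) - r2 1 * (q 0 - r3 0)) + v*((r1 0 * (q 1 - r3 1) - r1 1 * (q 0 - r3 0) + (r3 0 * (q 1 - r3 1) - r3 1 * (q 0 - r3 0)))/2) := by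
      linear_combination (q 1 - r3 1) * hB0 - (q 0 - r3 0) * hB1 + v * Gp2 - Gx1
    have hF := between_mul hu0 hu1 hcF
    have hG := between_mul hv0 hv1 hcG
    exact P12 ⟨by linarith [hF], by linarith [hG]⟩
  · refine Set.disjoint_left.mpr ?_
    intro x hxA hxB
    obtain ⟨u, hu0, hu1, hA0, hA1⟩ := seg_coords hxA
    obtain ⟨v, hv0, hv1, hB0, hB1⟩ := seg_coords hxB
    have Gx1 : x 0 * (q 1 - r3 1) - x 1 * (q 0 - r3 0) = r1 0 * (q 1 - r3 1) - r1 1 * (q 0 - r3 0) := by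
      linear_combination (q 1 - r3 1) * hA0 - (q 0 - r3 0) * hA1 + u * Gp1
    have Gx3 : x 0 * (q 1 - r3 1) - x 1 * (q 0 - r3 0) = r3 0 * (q 1 - r3 1) - r3 1 * (q 0 - r3 0) := by
      linear_combination (q 1 - r3 1) * hB0 - (q 0 - r3 0) * hB1 + v * Gp3
    exact hY13 (by linarith [Gx1, Gx3])
  · refine Set.disjoint_left.mpr ?_
    intro x hxA hxB
    obtain ⟨u, hu0, hu1, hA0, hA1⟩ := seg_coords hxA
    obtain ⟨v, hv0, hv1, hB0, hB1⟩ := seg_coords hxB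
    have Gx1 : x 0 * (q 1 - r3 1) - x 1 * (q 0 - r3 0) = r1 0 * (q 1 - r3 1) - r1 1 * (q 0 - r3 0) := by
      linear_combination (q 1 - r3 1) * hA0 - (q 0 - r3 0) * hA1 + u * Gp1
    have Fx4 : x 0 * (q 0 - r3 0) + x 1 * (q 1 - r3 1) = r4 0 * (q 0 - r3 0) + r4 1 * (q 1 - r3 1) := by
      linear_combination (q 0 - r3 0) * hB0 + (q 1 - r3 1) * hB1 + v * Fp4
    have hcF : r4 0 * (q 0 - r3 0) + r4 1 * (q 1 - r3 1) = (1-u)*(r1 0 * (q 0 - r3 0) + r1 1 * (q 1 - r3 1)) + u*((r4 0 * (q 0 - r3 0) + r4 1 * (q 1 - r3 1) + (r2 0 * (q 0 - r3 0) + r2 1 * (q 1 - r3 1)))/2) := by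
      linear_combination (q 0 - r3 0) * hA0 + (q 1 - r3 1) * hA1 + u * Fp1 - Fx4
    have hcG : r1 0 * (q 1 - r3 1) - r1 1 * (q 0 - r3 0) = (1-v)*(r4 0 * (q 1 - r3 1) - r4 1 * (q 0 - r3 0)) + v*((r3 0 * (q 1 - r3 1) - r3 1 * (q 0 - r3 0) + (r1 0 * (q 1 - r3 1) - r1 1 * (q 0 - r3 0)))/2) := by
      linear_combination (q 1 - r3 1) * hB0 - (q 0 - r3 0) * hB1 + v * Gp4 - Gx1
    have hF := between_mul hu0 hu1 hcF
    have hG := between_mul hv0 hv1 hcG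
    exact P14 ⟨by linarith [hF], by linarith [hG]⟩
  · refine Set.disjoint_left.mpr ?_
    intro x hxA hxB
    obtain ⟨u, hu0, hu1, hA0, hA1⟩ := seg_coords hxA
    obtain ⟨v, hv0, hv1, hB0, hB1⟩ := seg_coords hxB
    have Fx2 : x 0 * (q 0 - r3 0) + x 1 * (q 1 - r3 1) = r2 0 * (q 0 - r3 0) + r2 1 * (q 1 - r3 1) := by
      linear_combination (q 0 - r3 0) * hA0 + (q 1 - r3 1) * hA1 + u * Fp2
    have Gx3 : x 0 * (q 1 - r3 1) - x 1 * (q 0 - r3 0) = r3 0 * (q 1 - r3 1) - r3 1 * (q 0 - r3 0) := by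
      linear_combination (q 1 - r3 1) * hB0 - (q 0 - r3 0) * hB1 + v * Gp3
    have hcF : r2 0 * (q 0 - r3 0) + r2 1 * (q 1 - r3 1) = (1-v)*(r3 0 * (q 0 - r3 0) + r3 1 * (q 1 - r3 1)) + v*((r2 0 * (q 0 - r3 0) + r2 1 * (q 1 - r3 1) + (r4 0 * (q 0 - r3 0) + r4 1 * (q 1 - r3 1)))/2) := by
      linear_combination (q 0 - r3 0) * hB0 + (q 1 - r3 1) * hB1 + v * Fp3 - Fx2
    have hcG : r3 0 * (q 1 - r3 1) - r3 1 * (q 0 - r3 0) = (1-u)*(r2 0 * (q 1 - r3 1) - r2 1 * (q 0 - r3 0)) + u*((r1 0 * (q 1 - r3 1) - r1 1 * (q 0 - r3 0) + (r3 0 * (q 1 - r3 1) - r3 1 * (q 0 - r3 0)))/2) := by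
      linear_combination (q 1 - r3 1) * hA0 - (q 0 - r3 0) * hA1 + u * Gp2 - Gx3
    have hF := between_mul hv0 hv1 hcF
    have hG := between_mul hu0 hu1 hcG
    exact P23 ⟨by linarith [hF], by linarith [hG]⟩
  · refine Set.disjoint_left.mpr ?_
    intro x hxA hxB
    obtain ⟨u, hu0, hu1, hA0, hA1⟩ := seg_coords hxA
    obtain ⟨v, hv0, hv1, hB0, hB1⟩ := seg_coords hxB
    have Fx2 : x 0 * (q 0 - r3 0) + x 1 * (q 1 - r3 1) = r2 0 * (q 0 - r3 0) + r2 1 * (q 1 - r3 1) := by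
      linear_combination (q 0 - r3 0) * hA0 + (q 1 - r3 1) * hA1 + u * Fp2
    have Fx4 : x 0 * (q 0 - r3 0) + x 1 * (q 1 - r3 1) = r4 0 * (q 0 - r3 0) + r4 1 * (q 1 - r3 1) := by
      linear_combination (q 0 - r3 0) * hB0 + (q 1 - r3 1) * hB1 + v * Fp4
    exact hX24 (by linarith [Fx2, Fx4])
  · refine Set.disjoint_left.mpr ?_
    intro x hxA hxB
    obtain ⟨u, hu0, hu1, hA0, hA1⟩ := seg_coords hxA
    obtain ⟨v, hv0, hv1, hB0, hB1⟩ := seg_coords hxB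
    have Gx3 : x 0 * (q 1 - r3 1) - x 1 * (q 0 - r3 0) = r3 0 * (q 1 - r3 1) - r3 1 * (q 0 - r3 0) := by
      linear_combination (q 1 - r3 1) * hA0 - (q 0 - r3 0) * hA1 + u * Gp3
    have Fx4 : x 0 * (q 0 - r3 0) + x 1 * (q 1 - r3 1) = r4 0 * (q 0 - r3 0) + r4 1 * (q 1 - r3 1) := by
      linear_combination (q 0 - r3 0) * hB0 + (q 1 - r3 1) * hB1 + v * Fp4
    have hcF : r4 0 * (q 0 - r3 0) + r4 1 * (q 1 - r3 1) = (1-u)*(r3 0 * (q 0 - r3 0) + r3 1 * (q 1 - r3 1)) + u*((r2 0 * (q 0 - r3 0) + r2 1 * (q 1 - r3 1) + (r4 0 * (q 0 - r3 0) + r4 1 * (q 1 - r3 1)))/2) := by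
      linear_combination (q 0 - r3 0) * hA0 + (q 1 - r3 1) * hA1 + u * Fp3 - Fx4
    have hcG : r3 0 * (q 1 - r3 1) - r3 1 * (q 0 - r3 0) = (1-v)*(r4 0 * (q 1 - r3 1) - r4 1 * (q 0 - r3 0)) + v*((r3 0 * (q 1 - r3 1) - r3 1 * (q 0 - r3 0) + (r1 0 * (q 1 - r3 1) - r1 1 * (q 0 - r3 0)))/2) := by
      linear_combination (q 1 - r3 1) * hB0 - (q 0 - r3 0) * hB1 + v * Gp4 - Gx3
    have hF := between_mul hu0 hu1 hcF
    have hG := between_mul hv0 hv1 hcG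
    exact P34 ⟨by linarith [hF], by linarith [hG]⟩

end
end

section
/- Let r1, r2, r3, r4 be the vertices of a strictly convex quadrilateral listed in clockwise order, with non-orthogonal diagonals, and let p1, p2, p3, p4 be their targets under the target-square construction. If p1, p2, p3 are in clockwise order, then r1, r2, r3 are in clockwise order. -/
open EuclideanGeometry Real
open scoped RealInnerProductSpace

noncomputable section
set_option maxHeartbeats 1000000

lemma keylem (x1 y1 x2 y2 x3 y3 x4 y4 d0 d1 b120 b121 b230 b231 b340 b341 b410 b411 p10 p11 p20 p21 p30 p31 t : ℝ)
    (hc4 : 0 < (x1-x4)*(y2-y1)-(y1-y4)*(x2-x1))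
    (hc2 : 0 < (x3-x2)*(y4-y3)-(y3-y2)*(x4-x3))
    (hdiag : (x3-x1)*(x4-x2)+(y3-y1)*(y4-y2) ≠ 0)
    (hdn : ¬(d0 = 0 ∧ d1 = 0))
    (hperp : (d0+x3-x1)*(x4-x2)+(d1+y3-y1)*(y4-y2) = 0)
    (ht : 0 ≤ t)
    (hray : (x1+t*(d0+x3-x1)-x2)*(y4-y2)-(y1+t*(d1+y3-y1)-y2)*(x4-x2) = 0)
    (e12c : (b120-x1)*d1-(b121-y1)*d0 = 0)
    (e12i : (b120-x2)*d0+(b121-y2)*d1 = 0)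
    (e23i : (b230-x2)*d0+(b231-y2)*d1 = 0)
    (e23c : (b230-x3)*d1-(b231-y3)*d0 = 0)
    (e34c : (b340-x3)*d1-(b341-y3)*d0 = 0)
    (e34i : (b340-x4)*d0+(b341-y4)*d1 = 0)
    (e41i : (b410-x4)*d0+(b411-y4)*d1 = 0)
    (e41c : (b410-x1)*d1-(b411-y1)*d0 = 0)
    (hp10 : p10 = (b410+b120)/2) (hp11 : p11 = (b411+b121)/2)
    (hp20 : p20 = (b120+b230)/2) (hp21 : p21 = (b121+b231)/2)
    (hp30 : p30 = (b230+b340)/2) (hp31 : p31 = (b231+b341)/2)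
    (hcw : (p20-p10)*(p31-p11)-(p21-p11)*(p30-p10) < 0) : False := by
  have hn : 0 < d0^2+d1^2 := by
    rcases not_and_or.mp hdn with h | h
    · positivity
    · positivity
  have hM : 0 < (x4-x2)^2+(y4-y2)^2 := by
    by_contra hcon
    push_neg at hcon
    have h0 : x4 - x2 = 0 := by
      have := sq_nonneg (x4-x2)
      have := sq_nonneg (y4-y2)
      exact sq_eq_zero_iff.mp (le_antisymm (by linarith only [hcon, sq_nonneg (y4-y2)]) (sq_nonneg _))
    have h1 : y4 - y2 = 0 := by
      exact sq_eq_zero_iff.mp (le_antisymm (by linarith only [hcon, sq_nonneg (x4-x2)]) (sq_nonneg _))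
    have hz : (x3-x2)*(y4-y3)-(y3-y2)*(x4-x3) = 0 := by
      linear_combination (x3-x2)*h1 - (y3-y2)*h0
    linarith only [hz, hc2]
  have s12x : (d0^2+d1^2)*(b120-x1) = ((x2-x1)*d0+(y2-y1)*d1)*d0 := by
    linear_combination d0*e12i + d1*e12c
  have s12y : (d0^2+d1^2)*(b121-y1) = ((x2-x1)*d0+(y2-y1)*d1)*d1 := by
    linear_combination d1*e12i - d0*e12c
  have s23x : (d0^2+d1^2)*(b230-x3) = ((x2-x3)*d0+(y2-y3)*d1)*d0 := by
    linear_combination d0*e23i + d1*e23c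
  have s23y : (d0^2+d1^2)*(b231-y3) = ((x2-x3)*d0+(y2-y3)*d1)*d1 := by
    linear_combination d1*e23i - d0*e23c
  have s34x : (d0^2+d1^2)*(b340-x3) = ((x4-x3)*d0+(y4-y3)*d1)*d0 := by
    linear_combination d0*e34i + d1*e34c
  have s34y : (d0^2+d1^2)*(b341-y3) = ((x4-x3)*d0+(y4-y3)*d1)*d1 := by
    linear_combination d1*e34i - d0*e34c
  have s41x : (d0^2+d1^2)*(b410-x1) = ((x4-x1)*d0+(y4-y1)*d1)*d0 := by
    linear_combination d0*e41i + d1*e41c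
  have s41y : (d0^2+d1^2)*(b411-y1) = ((x4-x1)*d0+(y4-y1)*d1)*d1 := by
    linear_combination d1*e41i - d0*e41c
  have eA : 2*(d0^2+d1^2)*(p20-p10)
      = ((x2-x3)*d0+(y2-y3)*d1)*d0 - ((x4-x1)*d0+(y4-y1)*d1)*d0 + (d0^2+d1^2)*(x3-x1) := by
    linear_combination (2*(d0^2+d1^2))*hp20 - (2*(d0^2+d1^2))*hp10 + s23x - s41x
  have eB : 2*(d0^2+d1^2)*(p21-p11)
      = ((x2-x3)*d0+(y2-y3)*d1)*d1 - ((x4-x1)*d0+(y4-y1)*d1)*d1 + (d0^2+d1^2)*(y3-y1) := by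
    linear_combination (2*(d0^2+d1^2))*hp21 - (2*(d0^2+d1^2))*hp11 + s23y - s41y
  have eC : 2*(d0^2+d1^2)*(p30-p10)
      = (((x2-x3)*d0+(y2-y3)*d1)+((x4-x3)*d0+(y4-y3)*d1)-((x4-x1)*d0+(y4-y1)*d1)-((x2-x1)*d0+(y2-y1)*d1))*d0
        + 2*(d0^2+d1^2)*(x3-x1) := by
    linear_combination (2*(d0^2+d1^2))*hp30 - (2*(d0^2+d1^2))*hp10 + s23x + s34x - s41x - s12x
  have eD : 2*(d0^2+d1^2)*(p31-p11)
      = (((x2-x3)*d0+(y2-y3)*d1)+((x4-x3)*d0+(y4-y3)*d1)-((x4-x1)*d0+(y4-y1)*d1)-((x2-x1)*d0+(y2-y1)*d1))*d1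
        + 2*(d0^2+d1^2)*(y3-y1) := by
    linear_combination (2*(d0^2+d1^2))*hp31 - (2*(d0^2+d1^2))*hp11 + s23y + s34y - s41y - s12y
  have key1 : 4*(d0^2+d1^2)^2*((p20-p10)*(p31-p11)-(p21-p11)*(p30-p10))
      = 2*(d0^2+d1^2)*(((x4-x2)*d0+(y4-y2)*d1)*((x3-x1)*d1-(y3-y1)*d0)) := by
    linear_combination
      ((((x2-x3)*d0+(y2-y3)*d1)+((x4-x3)*d0+(y4-y3)*d1)-((x4-x1)*d0+(y4-y1)*d1)-((x2-x1)*d0+(y2-y1)*d1))*d1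
        + 2*(d0^2+d1^2)*(y3-y1)) * eA
      + (2*(d0^2+d1^2)*(p20-p10)) * eD
      - ((((x2-x3)*d0+(y2-y3)*d1)+((x4-x3)*d0+(y4-y3)*d1)-((x4-x1)*d0+(y4-y1)*d1)-((x2-x1)*d0+(y2-y1)*d1))*d0
        + 2*(d0^2+d1^2)*(x3-x1)) * eB
      - (2*(d0^2+d1^2)*(p21-p11)) * eC
  have h7 : 4*(d0^2+d1^2)^2*((p20-p10)*(p31-p11)-(p21-p11)*(p30-p10)) < 0 :=
    mul_neg_of_pos_of_neg (by positivity) hcw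
  rw [key1] at h7
  clear hcw key1 eA eB eC eD s12x s12y s23x s23y s34x s34y s41x s41y
  clear e12c e12i e23i e23c e34c e34i e41i e41c hp10 hp11 hp20 hp21 hp30 hp31 hdn
  clear b120 b121 b230 b231 b340 b341 b410 b411 p10 p11 p20 p21 p30 p31
  have hP : ((x4-x2)*d0+(y4-y2)*d1)*((x3-x1)*d1-(y3-y1)*d0) < 0 := by
    by_contra hcon
    push_neg at hcon
    linarith only [h7, mul_nonneg hn.le hcon]
  have hVD : (x4-x2)*d0+(y4-y2)*d1 = -((x3-x1)*(x4-x2)+(y3-y1)*(y4-y2)) := by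
    linear_combination hperp
  rw [hVD] at hP
  have h8 : 0 < ((x3-x1)*(x4-x2)+(y3-y1)*(y4-y2)) * ((x3-x1)*d1-(y3-y1)*d0) := by linarith only [hP]
  have hMC : ((x4-x2)^2+(y4-y2)^2)*((x3-x1)*d1-(y3-y1)*d0)
      = ((x4-x2)*(d1+y3-y1)-(y4-y2)*(d0+x3-x1))*((x3-x1)*(x4-x2)+(y3-y1)*(y4-y2)) := by
    linear_combination ((x3-x1)*(y4-y2)-(y3-y1)*(x4-x2)) * hperp
  have h9 : ((x4-x2)*(d1+y3-y1)-(y4-y2)*(d0+x3-x1))*(((x3-x1)*(x4-x2)+(y3-y1)*(y4-y2))^2)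
      = ((x4-x2)^2+(y4-y2)^2)*(((x3-x1)*(x4-x2)+(y3-y1)*(y4-y2)) * ((x3-x1)*d1-(y3-y1)*d0)) := by
    linear_combination (-((x3-x1)*(x4-x2)+(y3-y1)*(y4-y2))) * hMC
  have h10 : 0 < ((x4-x2)*(d1+y3-y1)-(y4-y2)*(d0+x3-x1))*(((x3-x1)*(x4-x2)+(y3-y1)*(y4-y2))^2) := by
    rw [h9]; exact mul_pos hM h8
  have hUV2 : 0 < ((x3-x1)*(x4-x2)+(y3-y1)*(y4-y2))^2 := by positivity
  have hK : 0 < (x4-x2)*(d1+y3-y1)-(y4-y2)*(d0+x3-x1) := by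
    rcases mul_pos_iff.mp h10 with ⟨h, _⟩ | ⟨_, h2⟩
    · exact h
    · exact absurd hUV2 (not_lt.mpr h2.le)
  have h11 : (x1-x2)*(y4-y2)-(y1-y2)*(x4-x2)
      = t * ((x4-x2)*(d1+y3-y1)-(y4-y2)*(d0+x3-x1)) := by
    linear_combination hray
  have h12 : 0 ≤ t * ((x4-x2)*(d1+y3-y1)-(y4-y2)*(d0+x3-x1)) := mul_nonneg ht hK.le
  have h13 : (x1-x2)*(y4-y2)-(y1-y2)*(x4-x2) < 0 := by linarith only [hc4]
  linarith only [h13, h11, h12]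

/-- If the targets `p1, p2, p3` are in clockwise order, then so are `r1, r2, r3`. -/
theorem stmt14
    (r1 r2 r3 r4 q a12 a23 a34 a41 : Pt)
    (hconv : Convex4 r1 r2 r3 r4)
    (hdiag : inner ℝ (r3 - r1) (r4 - r2) ≠ (0:ℝ))
    (hq : IsQPoint r1 r2 r3 r4 q) (hq3 : q ≠ r3)
    (ha12 : a12 ∈ lineDir r1 (q - r3) ∩ lineDir r2 (rot90 (q - r3)))
    (ha23 : a23 ∈ lineDir r2 (rot90 (q - r3)) ∩ lineDir r3 (q - r3))
    (ha34 : a34 ∈ lineDir r3 (q - r3) ∩ lineDir r4 (rot90 (q - r3)))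
    (ha41 : a41 ∈ lineDir r4 (rot90 (q - r3)) ∩ lineDir r1 (q - r3))
    (p1 p2 p3 p4 : Pt)
    (hp1 : p1 = midpoint ℝ a41 a12) (hp2 : p2 = midpoint ℝ a12 a23)
    (hp3 : p3 = midpoint ℝ a23 a34) (hp4 : p4 = midpoint ℝ a34 a41)
    (hcwp : cross2 (p2 - p1) (p3 - p1) < 0) :
    cross2 (r2 - r1) (r3 - r1) < 0 := by
  simp only [lineDir, rot90, Set.mem_inter_iff, Set.mem_setOf_eq, cross2, PiLp.sub_apply, PiLp.toLp_apply,
    Matrix.cons_val_one, Matrix.cons_val_zero, Matrix.head_cons] at ha12 ha23 ha34 ha41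
  obtain ⟨e12c, e12i⟩ := ha12
  obtain ⟨e23i, e23c⟩ := ha23
  obtain ⟨e34c, e34i⟩ := ha34
  obtain ⟨e41i, e41c⟩ := ha41
  obtain ⟨hqd, hqperp, t, ht, hqray⟩ := hq
  simp only [PiLp.inner_apply, Fin.sum_univ_two, PiLp.sub_apply, RCLike.inner_apply,
    conj_trivial, map_sub] at hqperp hdiag
  simp only [lineDir, Set.mem_setOf_eq, cross2, PiLp.sub_apply, PiLp.add_apply,
    PiLp.smul_apply, smul_eq_mul] at hqray
  simp only [cross2, PiLp.sub_apply] at hcwp ⊢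
  have hdn : ¬(q 0 - r3 0 = 0 ∧ q 1 - r3 1 = 0) := by
    rintro ⟨h0, h1⟩
    apply hq3
    ext i
    fin_cases i
    · show q 0 = r3 0; linarith
    · show q 1 = r3 1; linarith
  rcases hconv with hpos | hneg
  · -- counterclockwise case: contradiction via keylem
    obtain ⟨hp1', hp2', hp3', hp4'⟩ := hpos
    simp only [cross2, PiLp.sub_apply] at hp2' hp4'
    exfalso
    refine keylem (r1 0) (r1 1) (r2 0) (r2 1) (r3 0) (r3 1) (r4 0) (r4 1)
      (q 0 - r3 0) (q 1 - r3 1) (a12 0) (a12 1) (a23 0) (a23 1) (a34 0) (a34 1)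
      (a41 0) (a41 1) (p1 0) (p1 1) (p2 0) (p2 1) (p3 0) (p3 1) t
      (by linarith) (by linarith) (fun h => hdiag (by linarith)) hdn
      (by linear_combination hqperp) ht (by linear_combination hqray)
      (by linear_combination e12c) (by linear_combination e12i)
      (by linear_combination e23i) (by linear_combination e23c)
      (by linear_combination e34c) (by linear_combination e34i)
      (by linear_combination e41i) (by linear_combination e41c)
      ?_ ?_ ?_ ?_ ?_ ?_ (by linarith) <;>
    · first
      | (rw [hp1]; simp [midpoint_eq_smul_add, PiLp.add_apply, PiLp.smul_apply]; ring)
      | (rw [hp2]; simp [midpoint_eq_smul_add, PiLp.add_apply, PiLp.smul_apply]; ring)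
      | (rw [hp3]; simp [midpoint_eq_smul_add, PiLp.add_apply, PiLp.smul_apply]; ring)
  · -- clockwise case: immediate
    have h := hneg.1
    simp only [cross2, PiLp.sub_apply] at h
    nlinarith [h]

end
end

section
/- Let r3 and r4 move along their guidelines toward their targets p3 and p4 in a convergent manner (so the segment r3 r4 rotates and/or shrinks toward the intersection point g of their guidelines, which lies beyond both targets). Let H(t) be the thin hexagon with main diagonal r3(t) r4(t) at time t. If a point x is initially outside H(0) or on a beacon of H(0), then x remains strictly outside H(t) for all t > 0, because H(t) is obtained from H(0) by a composition of shrinkages about an extreme and rotations about an extreme in the direction away from x. -/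
open EuclideanGeometry Real
open scoped RealInnerProductSpace

set_option maxHeartbeats 1600000
noncomputable section

/-- The four beacons of the thin hexagon with main diagonal `u v`. -/
def beaconSet (u v : Pt) : Set Pt :=
  {u + (4:ℝ)⁻¹ • (Real.cos (5 * π / 36) • (v - u) + Real.sin (5 * π / 36) • rot90 (v - u)),
   u + (4:ℝ)⁻¹ • (Real.cos (5 * π / 36) • (v - u) - Real.sin (5 * π / 36) • rot90 (v - u)),
   v - (4:ℝ)⁻¹ • (Real.cos (5 * π / 36) • (v - u) + Real.sin (5 * π / 36) • rot90 (v - u)),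
   v - (4:ℝ)⁻¹ • (Real.cos (5 * π / 36) • (v - u) - Real.sin (5 * π / 36) • rot90 (v - u))}

/-- The (closed) thin hexagon with main diagonal `u v`, as a convex region. -/
def thinHexSet (u v : Pt) : Set Pt :=
  convexHull ℝ (insert u (insert v (beaconSet u v)))

private def ptm (x y : ℝ) : Pt := WithLp.toLp 2 ![x, y]
@[simp] private lemma ptm_zero (x y : ℝ) : ptm x y 0 = x := rfl
@[simp] private lemma ptm_one (x y : ℝ) : ptm x y 1 = y := rfl

private lemma convex_cross2_lt (p d : Pt) (k : ℝ) : Convex ℝ {z : Pt | cross2 (z - p) d < k} := by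
  intro u hu v hv α β hα hβ hαβ
  simp only [Set.mem_setOf_eq] at hu hv ⊢
  have hexp : cross2 (α • u + β • v - p) d
      = α * cross2 (u - p) d + β * cross2 (v - p) d := by
    simp only [cross2, PiLp.add_apply, PiLp.sub_apply, PiLp.smul_apply, smul_eq_mul]
    linear_combination (p 0 * d 1 - p 1 * d 0) * hαβ
  rw [hexp]
  rcases eq_or_lt_of_le hα with h | h
  · have hβ1 : β = 1 := by linarith
    rw [← h, hβ1]; linarith
  · have h1 : α * cross2 (u - p) d < α * k := mul_lt_mul_of_pos_left hu h
    have h2 : β * cross2 (v - p) d ≤ β * k := mul_le_mul_of_nonneg_left hv.le hβ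
    have h3 : α * k + β * k = k := by linear_combination k * hαβ
    linarith

private lemma convex_cross2_le (p d : Pt) (k : ℝ) : Convex ℝ {z : Pt | cross2 (z - p) d ≤ k} := by
  intro u hu v hv α β hα hβ hαβ
  simp only [Set.mem_setOf_eq] at hu hv ⊢
  have hexp : cross2 (α • u + β • v - p) d
      = α * cross2 (u - p) d + β * cross2 (v - p) d := by
    simp only [cross2, PiLp.add_apply, PiLp.sub_apply, PiLp.smul_apply, smul_eq_mul]
    linear_combination (p 0 * d 1 - p 1 * d 0) * hαβ
  rw [hexp]
  have h1 : α * cross2 (u - p) d ≤ α * k := mul_le_mul_of_nonneg_left hu hα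
  have h2 : β * cross2 (v - p) d ≤ β * k := mul_le_mul_of_nonneg_left hv hβ
  have h3 : α * k + β * k = k := by linear_combination k * hαβ
  linarith

private lemma tri_mem (A B C x : Pt) (hD : 0 < cross2 (B - A) (C - A))
    (h1 : 0 ≤ cross2 (B - x) (C - x)) (h2 : 0 ≤ cross2 (C - x) (A - x))
    (h3 : 0 ≤ cross2 (A - x) (B - x)) :
    x ∈ convexHull ℝ ({A, B, C} : Set Pt) := by
  set w : Fin 3 → ℝ := ![cross2 (B - x) (C - x), cross2 (C - x) (A - x), cross2 (A - x) (B - x)] with hw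
  set z : Fin 3 → Pt := ![A, B, C] with hz
  have hsum : ∑ i, w i = cross2 (B - A) (C - A) := by
    simp only [hw, Fin.sum_univ_three, Matrix.cons_val_zero, Matrix.cons_val_one,
      Matrix.head_cons, Matrix.cons_val_two, Matrix.tail_cons, cross2, PiLp.sub_apply]
    ring
  have hws : 0 < ∑ i, w i := by rw [hsum]; exact hD
  have hw0 : ∀ i ∈ Finset.univ, 0 ≤ w i := by
    intro i _
    fin_cases i
    · simpa [hw] using h1
    · simpa [hw] using h2
    · simpa [hw] using h3
  have hzmem : ∀ i ∈ Finset.univ, z i ∈ ({A, B, C} : Set Pt) := by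
    intro i _
    fin_cases i
    · simp [hz]
    · simp [hz]
    · simp [hz]
  have hvec : ∑ i, w i • z i = (∑ i, w i) • x := by
    rw [hsum]
    simp only [hw, hz, Fin.sum_univ_three, Matrix.cons_val_zero, Matrix.cons_val_one,
      Matrix.head_cons, Matrix.cons_val_two, Matrix.tail_cons]
    apply PiLp.ext
    rw [Fin.forall_fin_two]
    constructor <;>
    · simp only [PiLp.add_apply, PiLp.smul_apply, PiLp.sub_apply, smul_eq_mul, cross2]
      ring
  have hcm : Finset.univ.centerMass w z = x := by
    rw [Finset.centerMass, hvec, smul_smul, inv_mul_cancel₀ (ne_of_gt hws), one_smul]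
  exact hcm ▸ Finset.centerMass_mem_convexHull _ hw0 hws hzmem

private lemma genL (a b σ ρ : ℝ) (ha : 0 < a) (hb : 0 < b)
    (hσ0 : 0 ≤ σ) (hσ1 : σ ≤ 1) (hρ0 : 0 ≤ ρ) (hρ1 : ρ ≤ 1)
    (hst : 0 < σ ∨ 0 < ρ) :
    thinHexSet (ptm ((1 - σ) * a) 0) (ptm 0 ((1 - ρ) * b)) ⊆
      {z : Pt | cross2 (z - ptm a 0) (ptm 0 b - ptm a 0)
        < Real.sin (5 * π / 36) / 4 * (a ^ 2 + b ^ 2)} := by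
  have hπ : (0:ℝ) < π := Real.pi_pos
  set s := Real.sin (5 * π / 36) with hsdef
  set c := Real.cos (5 * π / 36) with hcdef
  have hs : 0 < s := Real.sin_pos_of_pos_of_lt_pi (by positivity) (by linarith)
  have hc1 : c ≤ 1 := Real.cos_le_one _
  have hcpos : 0 < c := by
    rw [hcdef]
    exact Real.cos_pos_of_mem_Ioo ⟨by linarith, by linarith⟩
  have hsc : s ^ 2 + c ^ 2 = 1 := Real.sin_sq_add_cos_sq _
  have hcc : Real.cos (π / 4) < c := by
    rw [hcdef]
    exact Real.cos_lt_cos_of_nonneg_of_le_pi (by positivity) (by linarith) (by linarith)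
  have hc2 : 1 / 2 < c ^ 2 := by
    rw [Real.cos_pi_div_four] at hcc
    have h2 : (0:ℝ) < Real.sqrt 2 := Real.sqrt_pos.mpr (by norm_num)
    have hs2 : (Real.sqrt 2) ^ 2 = 2 := Real.sq_sqrt (by norm_num)
    nlinarith [hcc, h2]
  have hc14 : 1 / 4 < c := by nlinarith [mul_nonneg hcpos.le (sub_nonneg.mpr hc1)]
  have hc4c : (0:ℝ) ≤ 4 * c - 1 := by linarith
  have hc2c : (0:ℝ) ≤ 2 * c ^ 2 - 1 := by linarith
  have hcq : (0:ℝ) ≤ 4 * c + 1 - 2 * c ^ 2 := by nlinarith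
  have h2c : (0:ℝ) ≤ 2 - c := by linarith
  have hT1 : (0:ℝ) ≤ 1 - ρ := by linarith
  have hS1 : (0:ℝ) ≤ 1 - σ := by linarith
  have hA2 : (0:ℝ) < a ^ 2 + b ^ 2 := by positivity
  have hab := (mul_pos ha hb).le
  have eT : a * b * ρ * s ^ 2 + a * b * ρ * c ^ 2 = a * b * ρ := by
    linear_combination (a * b * ρ) * hsc
  have eS : a * b * σ * s ^ 2 + a * b * σ * c ^ 2 = a * b * σ := by
    linear_combination (a * b * σ) * hsc
  have pb2s := mul_nonneg (sq_nonneg b) hs.le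
  have pa2s := mul_nonneg (sq_nonneg a) hs.le
  have pabT := mul_nonneg hab hρ0
  have pabS := mul_nonneg hab hσ0
  apply convexHull_min _ (convex_cross2_lt _ _ _)
  intro z hz
  simp only [Set.mem_insert_iff, beaconSet, Set.mem_singleton_iff, ← hsdef, ← hcdef] at hz
  simp only [Set.mem_setOf_eq]
  rcases hz with rfl | rfl | rfl | rfl | rfl | rfl <;>
    simp only [cross2, rot90, PiLp.toLp_apply, PiLp.add_apply, PiLp.sub_apply, PiLp.smul_apply, PiLp.neg_apply,
      smul_eq_mul, Matrix.cons_val_zero, Matrix.cons_val_one, Matrix.head_cons,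
      ptm_zero, ptm_one]
  · nlinarith [mul_pos hs hA2, mul_nonneg (mul_nonneg hσ0 ha.le) hb.le]
  · nlinarith [mul_pos hs hA2, mul_nonneg (mul_nonneg hρ0 ha.le) hb.le]
  · nlinarith [mul_pos (mul_pos (pow_pos hb 2) hs) (show (0:ℝ) < 2 - ρ by linarith),
      mul_pos (mul_pos (pow_pos ha 2) hs) (show (0:ℝ) < 2 - σ by linarith),
      mul_nonneg (mul_nonneg (mul_nonneg ha.le hb.le) hρ0) hcpos.le,
      mul_nonneg (mul_nonneg (mul_nonneg ha.le hb.le) hσ0) (show (0:ℝ) ≤ 4 - c by linarith)]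
  · rcases hst with h | h
    · nlinarith [mul_pos (mul_pos (mul_pos ha hb) h) (show (0:ℝ) < 4 - c by linarith),
        mul_nonneg (mul_nonneg (pow_pos hb 2).le hρ0) hs.le,
        mul_nonneg (mul_nonneg (mul_nonneg ha.le hb.le) hρ0) hcpos.le,
        mul_nonneg (mul_nonneg (pow_pos ha 2).le hσ0) hs.le]
    · nlinarith [mul_pos (mul_pos (mul_pos ha hb) h) hcpos,
        mul_nonneg (mul_nonneg (pow_pos hb 2).le hρ0) hs.le,
        mul_nonneg (mul_nonneg (mul_nonneg ha.le hb.le) hσ0) (show (0:ℝ) ≤ 4 - c by linarith),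
        mul_nonneg (mul_nonneg (pow_pos ha 2).le hσ0) hs.le]
  · rcases hst with h | h
    · nlinarith [mul_pos (mul_pos (mul_pos ha hb) h) hcpos,
        mul_nonneg (mul_nonneg (pow_pos hb 2).le hρ0) hs.le,
        mul_nonneg (mul_nonneg (mul_nonneg ha.le hb.le) hρ0) (show (0:ℝ) ≤ 4 - c by linarith),
        mul_nonneg (mul_nonneg (pow_pos ha 2).le hσ0) hs.le]
    · nlinarith [mul_pos (mul_pos (mul_pos ha hb) h) (show (0:ℝ) < 4 - c by linarith),
        mul_nonneg (mul_nonneg (pow_pos hb 2).le hρ0) hs.le,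
        mul_nonneg (mul_nonneg (mul_nonneg ha.le hb.le) hσ0) hcpos.le,
        mul_nonneg (mul_nonneg (pow_pos ha 2).le hσ0) hs.le]
  · nlinarith [mul_pos (mul_pos (pow_pos hb 2) hs) (show (0:ℝ) < 2 - ρ by linarith),
      mul_pos (mul_pos (pow_pos ha 2) hs) (show (0:ℝ) < 2 - σ by linarith),
      mul_nonneg (mul_nonneg (mul_nonneg ha.le hb.le) hσ0) hcpos.le,
      mul_nonneg (mul_nonneg (mul_nonneg ha.le hb.le) hρ0) (show (0:ℝ) ≤ 4 - c by linarith)]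

private lemma gen1 (a b σ ρ : ℝ) (ha : 0 < a) (hb : 0 < b)
    (hσ0 : 0 ≤ σ) (hσ1 : σ ≤ 1) (hρ0 : 0 ≤ ρ) (hρ1 : ρ ≤ 1) :
    thinHexSet (ptm ((1 - σ) * a) 0) (ptm 0 ((1 - ρ) * b)) ⊆
      {z : Pt | cross2 (z - ptm a 0)
        ((ptm a 0 + (4:ℝ)⁻¹ • (Real.cos (5 * π / 36) • (ptm 0 b - ptm a 0)
          - Real.sin (5 * π / 36) • rot90 (ptm 0 b - ptm a 0))) - ptm a 0) ≤ 0} := by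
  have hπ : (0:ℝ) < π := Real.pi_pos
  set s := Real.sin (5 * π / 36) with hsdef
  set c := Real.cos (5 * π / 36) with hcdef
  have hs : 0 < s := Real.sin_pos_of_pos_of_lt_pi (by positivity) (by linarith)
  have hc1 : c ≤ 1 := Real.cos_le_one _
  have hcpos : 0 < c := by
    rw [hcdef]
    exact Real.cos_pos_of_mem_Ioo ⟨by linarith, by linarith⟩
  have hsc : s ^ 2 + c ^ 2 = 1 := Real.sin_sq_add_cos_sq _
  have hcc : Real.cos (π / 4) < c := by
    rw [hcdef]
    exact Real.cos_lt_cos_of_nonneg_of_le_pi (by positivity) (by linarith) (by linarith)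
  have hc2 : 1 / 2 < c ^ 2 := by
    rw [Real.cos_pi_div_four] at hcc
    have h2 : (0:ℝ) < Real.sqrt 2 := Real.sqrt_pos.mpr (by norm_num)
    have hs2 : (Real.sqrt 2) ^ 2 = 2 := Real.sq_sqrt (by norm_num)
    nlinarith [hcc, h2]
  have hc14 : 1 / 4 < c := by nlinarith [mul_nonneg hcpos.le (sub_nonneg.mpr hc1)]
  have hc4c : (0:ℝ) ≤ 4 * c - 1 := by linarith
  have hc2c : (0:ℝ) ≤ 2 * c ^ 2 - 1 := by linarith
  have hcq : (0:ℝ) ≤ 4 * c + 1 - 2 * c ^ 2 := by nlinarith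
  have h2c : (0:ℝ) ≤ 2 - c := by linarith
  have hT1 : (0:ℝ) ≤ 1 - ρ := by linarith
  have hS1 : (0:ℝ) ≤ 1 - σ := by linarith
  have hA2 : (0:ℝ) < a ^ 2 + b ^ 2 := by positivity
  have hab := (mul_pos ha hb).le
  have eT : a * b * ρ * s ^ 2 + a * b * ρ * c ^ 2 = a * b * ρ := by
    linear_combination (a * b * ρ) * hsc
  have eS : a * b * σ * s ^ 2 + a * b * σ * c ^ 2 = a * b * σ := by
    linear_combination (a * b * σ) * hsc
  have pb2s := mul_nonneg (sq_nonneg b) hs.le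
  have pa2s := mul_nonneg (sq_nonneg a) hs.le
  have pabT := mul_nonneg hab hρ0
  have pabS := mul_nonneg hab hσ0
  apply convexHull_min _ (convex_cross2_le _ _ _)
  intro z hz
  simp only [Set.mem_insert_iff, beaconSet, Set.mem_singleton_iff, ← hsdef, ← hcdef] at hz
  simp only [Set.mem_setOf_eq]
  rcases hz with rfl | rfl | rfl | rfl | rfl | rfl <;>
    simp only [cross2, rot90, PiLp.toLp_apply, PiLp.add_apply, PiLp.sub_apply, PiLp.smul_apply, PiLp.neg_apply,
      smul_eq_mul, Matrix.cons_val_zero, Matrix.cons_val_one, Matrix.head_cons,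
      ptm_zero, ptm_one]
  · nlinarith [mul_nonneg pabS hcpos.le, mul_nonneg (mul_nonneg (sq_nonneg a) hσ0) hs.le]
  · nlinarith [mul_nonneg pb2s hT1, mul_nonneg pabT hcpos.le, pa2s]
  · nlinarith [eT, eS, mul_nonneg (mul_nonneg (mul_nonneg (sq_nonneg b) hcpos.le) hs.le) hT1,
      mul_nonneg pabT hc2c, mul_nonneg pabS hcq,
      mul_nonneg (mul_nonneg (mul_nonneg (sq_nonneg a) hcpos.le) hs.le) hS1,
      mul_nonneg (mul_nonneg (sq_nonneg a) hσ0) hs.le]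
  · nlinarith [eT, eS, pabT, mul_nonneg pabS hc4c,
      mul_nonneg (mul_nonneg (sq_nonneg a) hσ0) hs.le]
  · nlinarith [eT, eS, mul_nonneg (mul_nonneg pb2s h2c) hT1,
      mul_nonneg pabT hcq, mul_nonneg pabS hc2c, mul_nonneg pa2s h2c,
      mul_nonneg (mul_nonneg (mul_nonneg (sq_nonneg a) hσ0) hcpos.le) hs.le]
  · nlinarith [eT, eS, mul_nonneg pb2s hT1, mul_nonneg pabT hc4c, pabS, pa2s]

private lemma gen3 (a b σ ρ : ℝ) (ha : 0 < a) (hb : 0 < b)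
    (hσ0 : 0 ≤ σ) (hσ1 : σ ≤ 1) (hρ0 : 0 ≤ ρ) (hρ1 : ρ ≤ 1) :
    thinHexSet (ptm ((1 - σ) * a) 0) (ptm 0 ((1 - ρ) * b)) ⊆
      {z : Pt | cross2 (z - (ptm 0 b - (4:ℝ)⁻¹ • (Real.cos (5 * π / 36) • (ptm 0 b - ptm a 0)
          + Real.sin (5 * π / 36) • rot90 (ptm 0 b - ptm a 0))))
        (ptm 0 b - (ptm 0 b - (4:ℝ)⁻¹ • (Real.cos (5 * π / 36) • (ptm 0 b - ptm a 0)
          + Real.sin (5 * π / 36) • rot90 (ptm 0 b - ptm a 0)))) ≤ 0} := by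
  have hπ : (0:ℝ) < π := Real.pi_pos
  set s := Real.sin (5 * π / 36) with hsdef
  set c := Real.cos (5 * π / 36) with hcdef
  have hs : 0 < s := Real.sin_pos_of_pos_of_lt_pi (by positivity) (by linarith)
  have hc1 : c ≤ 1 := Real.cos_le_one _
  have hcpos : 0 < c := by
    rw [hcdef]
    exact Real.cos_pos_of_mem_Ioo ⟨by linarith, by linarith⟩
  have hsc : s ^ 2 + c ^ 2 = 1 := Real.sin_sq_add_cos_sq _
  have hcc : Real.cos (π / 4) < c := by
    rw [hcdef]
    exact Real.cos_lt_cos_of_nonneg_of_le_pi (by positivity) (by linarith) (by linarith)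
  have hc2 : 1 / 2 < c ^ 2 := by
    rw [Real.cos_pi_div_four] at hcc
    have h2 : (0:ℝ) < Real.sqrt 2 := Real.sqrt_pos.mpr (by norm_num)
    have hs2 : (Real.sqrt 2) ^ 2 = 2 := Real.sq_sqrt (by norm_num)
    nlinarith [hcc, h2]
  have hc14 : 1 / 4 < c := by nlinarith [mul_nonneg hcpos.le (sub_nonneg.mpr hc1)]
  have hc4c : (0:ℝ) ≤ 4 * c - 1 := by linarith
  have hc2c : (0:ℝ) ≤ 2 * c ^ 2 - 1 := by linarith
  have hcq : (0:ℝ) ≤ 4 * c + 1 - 2 * c ^ 2 := by nlinarith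
  have h2c : (0:ℝ) ≤ 2 - c := by linarith
  have hT1 : (0:ℝ) ≤ 1 - ρ := by linarith
  have hS1 : (0:ℝ) ≤ 1 - σ := by linarith
  have hA2 : (0:ℝ) < a ^ 2 + b ^ 2 := by positivity
  have hab := (mul_pos ha hb).le
  have eT : a * b * ρ * s ^ 2 + a * b * ρ * c ^ 2 = a * b * ρ := by
    linear_combination (a * b * ρ) * hsc
  have eS : a * b * σ * s ^ 2 + a * b * σ * c ^ 2 = a * b * σ := by
    linear_combination (a * b * σ) * hsc
  have pb2s := mul_nonneg (sq_nonneg b) hs.le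
  have pa2s := mul_nonneg (sq_nonneg a) hs.le
  have pabT := mul_nonneg hab hρ0
  have pabS := mul_nonneg hab hσ0
  apply convexHull_min _ (convex_cross2_le _ _ _)
  intro z hz
  simp only [Set.mem_insert_iff, beaconSet, Set.mem_singleton_iff, ← hsdef, ← hcdef] at hz
  simp only [Set.mem_setOf_eq]
  rcases hz with rfl | rfl | rfl | rfl | rfl | rfl <;>
    simp only [cross2, rot90, PiLp.toLp_apply, PiLp.add_apply, PiLp.sub_apply, PiLp.smul_apply, PiLp.neg_apply,
      smul_eq_mul, Matrix.cons_val_zero, Matrix.cons_val_one, Matrix.head_cons,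
      ptm_zero, ptm_one]
  · nlinarith [pb2s, mul_nonneg pabS hcpos.le, mul_nonneg pa2s hS1]
  · nlinarith [mul_nonneg pb2s hρ0, mul_nonneg pabT hcpos.le]
  · nlinarith [eT, eS, pb2s, pabT, mul_nonneg pabS hc4c, mul_nonneg pa2s hS1]
  · nlinarith [eT, eS, mul_nonneg pb2s h2c,
      mul_nonneg (mul_nonneg (mul_nonneg (sq_nonneg b) hρ0) hcpos.le) hs.le,
      mul_nonneg pabT hc2c, mul_nonneg pabS hcq,
      mul_nonneg (mul_nonneg pa2s h2c) hS1]
  · nlinarith [eT, eS, mul_nonneg pb2s hρ0, mul_nonneg pabT hc4c, pabS]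
  · nlinarith [eT, eS, mul_nonneg (mul_nonneg (mul_nonneg (sq_nonneg b) hcpos.le) hs.le) hT1,
      mul_nonneg pb2s hρ0, mul_nonneg pabT hcq, mul_nonneg pabS hc2c,
      mul_nonneg (mul_nonneg (mul_nonneg (sq_nonneg a) hcpos.le) hs.le) hS1]

private lemma core (a b σ ρ : ℝ) (x : Pt) (ha : 0 < a) (hb : 0 < b)
    (hσ0 : 0 ≤ σ) (hσ1 : σ ≤ 1) (hρ0 : 0 ≤ ρ) (hρ1 : ρ ≤ 1)
    (hst : 0 < σ ∨ 0 < ρ)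
    (hL : 0 < cross2 (x - ptm a 0) (ptm 0 b - ptm a 0))
    (hx : x ∉ thinHexSet (ptm a 0) (ptm 0 b) ∨ x ∈ beaconSet (ptm a 0) (ptm 0 b)) :
    x ∉ thinHexSet (ptm ((1 - σ) * a) 0) (ptm 0 ((1 - ρ) * b)) := by
  intro hmem
  have hπ : (0:ℝ) < π := Real.pi_pos
  set s := Real.sin (5 * π / 36) with hsdef
  set c := Real.cos (5 * π / 36) with hcdef
  have hs : 0 < s := Real.sin_pos_of_pos_of_lt_pi (by positivity) (by linarith)
  have hc1 : c ≤ 1 := Real.cos_le_one _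
  have hcpos : 0 < c := by
    rw [hcdef]
    exact Real.cos_pos_of_mem_Ioo ⟨by linarith, by linarith⟩
  have hsc : s ^ 2 + c ^ 2 = 1 := Real.sin_sq_add_cos_sq _
  have hcc : Real.cos (π / 4) < c := by
    rw [hcdef]
    exact Real.cos_lt_cos_of_nonneg_of_le_pi (by positivity) (by linarith) (by linarith)
  have hc2 : 1 / 2 < c ^ 2 := by
    rw [Real.cos_pi_div_four] at hcc
    have h2 : (0:ℝ) < Real.sqrt 2 := Real.sqrt_pos.mpr (by norm_num)
    have hs2 : (Real.sqrt 2) ^ 2 = 2 := Real.sq_sqrt (by norm_num)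
    nlinarith [hcc, h2]
  have hc14 : 1 / 4 < c := by nlinarith [mul_nonneg hcpos.le (sub_nonneg.mpr hc1)]
  have hc4c : (0:ℝ) ≤ 4 * c - 1 := by linarith
  have hc2c : (0:ℝ) ≤ 2 * c ^ 2 - 1 := by linarith
  have hcq : (0:ℝ) ≤ 4 * c + 1 - 2 * c ^ 2 := by nlinarith
  have h2c : (0:ℝ) ≤ 2 - c := by linarith
  have hT1 : (0:ℝ) ≤ 1 - ρ := by linarith
  have hS1 : (0:ℝ) ≤ 1 - σ := by linarith
  have hA2 : (0:ℝ) < a ^ 2 + b ^ 2 := by positivity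
  have hab := (mul_pos ha hb).le
  have eT : a * b * ρ * s ^ 2 + a * b * ρ * c ^ 2 = a * b * ρ := by
    linear_combination (a * b * ρ) * hsc
  have eS : a * b * σ * s ^ 2 + a * b * σ * c ^ 2 = a * b * σ := by
    linear_combination (a * b * σ) * hsc
  have pb2s := mul_nonneg (sq_nonneg b) hs.le
  have pa2s := mul_nonneg (sq_nonneg a) hs.le
  have pabT := mul_nonneg hab hρ0
  have pabS := mul_nonneg hab hσ0
  -- the three separating functionals evaluated on the moved hexagon
  have hKsub := genL a b σ ρ ha hb hσ0 hσ1 hρ0 hρ1 hst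
  have hKx : cross2 (x - ptm a 0) (ptm 0 b - ptm a 0) < s / 4 * (a ^ 2 + b ^ 2) := hKsub hmem
  rcases hx with hout | hbeac
  · -- x was outside the original hexagon: derive a contradiction by showing x inside it
    apply hout
    have h1sub := gen1 a b σ ρ ha hb hσ0 hσ1 hρ0 hρ1
    have h3sub := gen3 a b σ ρ ha hb hσ0 hσ1 hρ0 hρ1
    have hf1x := h1sub hmem
    have hf3x := h3sub hmem
    simp only [Set.mem_setOf_eq] at hf1x hf3x
    -- the two upper beacons of the original hexagon
    set B1 : Pt := ptm a 0 + (4:ℝ)⁻¹ • (c • (ptm 0 b - ptm a 0)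
        - s • rot90 (ptm 0 b - ptm a 0)) with hB1
    set B2 : Pt := ptm 0 b - (4:ℝ)⁻¹ • (c • (ptm 0 b - ptm a 0)
        + s • rot90 (ptm 0 b - ptm a 0)) with hB2
    have hgens : ({ptm a 0, ptm 0 b, B1, B2} : Set Pt) ⊆
        insert (ptm a 0) (insert (ptm 0 b) (beaconSet (ptm a 0) (ptm 0 b))) := by
      intro z hz
      simp only [Set.mem_insert_iff, Set.mem_singleton_iff] at hz
      simp only [Set.mem_insert_iff, beaconSet, Set.mem_singleton_iff, ← hsdef, ← hcdef, hB1, hB2]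
      tauto
    have hquad : x ∈ convexHull ℝ
        (insert (ptm a 0) (insert (ptm 0 b) (beaconSet (ptm a 0) (ptm 0 b)))) := by
      rcases le_or_gt 0 (cross2 (x - ptm a 0) (B2 - ptm a 0)) with hψ | hψ
      · refine convexHull_mono (Set.Subset.trans ?_ hgens) (tri_mem (ptm a 0) B1 B2 x ?_ ?_ ?_ ?_)
        · intro z hz
          simp only [Set.mem_insert_iff, Set.mem_singleton_iff] at hz ⊢
          tauto
        · -- determinant positive
          simp only [hB1, hB2, cross2, rot90, PiLp.toLp_apply, PiLp.add_apply, PiLp.sub_apply, PiLp.smul_apply,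
            PiLp.neg_apply, smul_eq_mul, Matrix.cons_val_zero, Matrix.cons_val_one,
            Matrix.head_cons, ptm_zero, ptm_one]
          nlinarith [mul_pos hs hA2, mul_nonneg (mul_pos hs hA2).le (show (0:ℝ) ≤ 1 - c by linarith)]
        · have hq : cross2 (B1 - x) (B2 - x)
              = (1 - c / 2) * (s / 4 * (a ^ 2 + b ^ 2) - cross2 (x - ptm a 0) (ptm 0 b - ptm a 0)) := by
            simp only [hB1, hB2, cross2, rot90, PiLp.toLp_apply, PiLp.add_apply, PiLp.sub_apply, PiLp.smul_apply,
              PiLp.neg_apply, smul_eq_mul, Matrix.cons_val_zero, Matrix.cons_val_one,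
              Matrix.head_cons, ptm_zero, ptm_one]
            ring
          rw [hq]
          apply mul_nonneg (by linarith) (by linarith)
        · have hq : cross2 (B2 - x) (ptm a 0 - x) = cross2 (x - ptm a 0) (B2 - ptm a 0) := by
            simp only [cross2, PiLp.sub_apply]; ring
          rw [hq]; exact hψ
        · have hq : cross2 (ptm a 0 - x) (B1 - x) = -cross2 (x - ptm a 0) (B1 - ptm a 0) := by
            simp only [cross2, PiLp.sub_apply]; ring
          rw [hq]
          have : cross2 (x - ptm a 0) (B1 - ptm a 0) ≤ 0 := hf1x
          linarith
      · refine convexHull_mono (Set.Subset.trans ?_ hgens) (tri_mem (ptm a 0) B2 (ptm 0 b) x ?_ ?_ ?_ ?_)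
        · intro z hz
          simp only [Set.mem_insert_iff, Set.mem_singleton_iff] at hz ⊢
          tauto
        · simp only [hB2, cross2, rot90, PiLp.toLp_apply, PiLp.add_apply, PiLp.sub_apply, PiLp.smul_apply,
            PiLp.neg_apply, smul_eq_mul, Matrix.cons_val_zero, Matrix.cons_val_one,
            Matrix.head_cons, ptm_zero, ptm_one]
          nlinarith [mul_pos hs hA2]
        · have hq : cross2 (B2 - x) (ptm 0 b - x) = -cross2 (x - B2) (ptm 0 b - B2) := by
            simp only [cross2, PiLp.sub_apply]; ring
          rw [hq]; linarith
        · have hq : cross2 (ptm 0 b - x) (ptm a 0 - x)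
              = cross2 (x - ptm a 0) (ptm 0 b - ptm a 0) := by
            simp only [cross2, PiLp.sub_apply]; ring
          rw [hq]; linarith
        · have hq : cross2 (ptm a 0 - x) (B2 - x) = -cross2 (x - ptm a 0) (B2 - ptm a 0) := by
            simp only [cross2, PiLp.sub_apply]; ring
          rw [hq]; linarith
    exact hquad
  · -- x is a beacon of the original hexagon
    simp only [beaconSet, Set.mem_insert_iff, Set.mem_singleton_iff, ← hsdef, ← hcdef] at hbeac
    rcases hbeac with rfl | rfl | rfl | rfl
    · -- lower beacon near r3 : contradicts hL
      simp only [cross2, rot90, PiLp.toLp_apply, PiLp.add_apply, PiLp.sub_apply, PiLp.smul_apply, PiLp.neg_apply,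
        smul_eq_mul, Matrix.cons_val_zero, Matrix.cons_val_one, Matrix.head_cons,
        ptm_zero, ptm_one] at hL
      nlinarith [mul_pos hs hA2, hL]
    · -- upper beacon near r3 : contradicts hKx
      simp only [cross2, rot90, PiLp.toLp_apply, PiLp.add_apply, PiLp.sub_apply, PiLp.smul_apply, PiLp.neg_apply,
        smul_eq_mul, Matrix.cons_val_zero, Matrix.cons_val_one, Matrix.head_cons,
        ptm_zero, ptm_one] at hKx
      nlinarith [hKx]
    · -- upper beacon near r4 : contradicts hKx
      simp only [cross2, rot90, PiLp.toLp_apply, PiLp.add_apply, PiLp.sub_apply, PiLp.smul_apply, PiLp.neg_apply,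
        smul_eq_mul, Matrix.cons_val_zero, Matrix.cons_val_one, Matrix.head_cons,
        ptm_zero, ptm_one] at hKx
      nlinarith [hKx]
    · -- lower beacon near r4 : contradicts hL
      simp only [cross2, rot90, PiLp.toLp_apply, PiLp.add_apply, PiLp.sub_apply, PiLp.smul_apply, PiLp.neg_apply,
        smul_eq_mul, Matrix.cons_val_zero, Matrix.cons_val_one, Matrix.head_cons,
        ptm_zero, ptm_one] at hL
      nlinarith [mul_pos hs hA2, hL]

/-- As two convergent robots move monotonically along their perpendicular guidelines toward
their targets, a point that is initially outside the thin hexagon on their segment, or on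
one of its beacons, remains strictly outside the moving thin hexagon. -/
theorem stmt17 (r3 r4 p3 p4 g x : Pt)
    (hperp : inner ℝ (g - r3) (g - r4) = (0:ℝ))
    (h3g : r3 ≠ g) (h4g : r4 ≠ g) (h34 : r3 ≠ r4)
    (hp3 : p3 ∈ segment ℝ r3 g) (hp4 : p4 ∈ segment ℝ r4 g)
    (hside : cross2 (x - r3) (r4 - r3) * cross2 (g - r3) (r4 - r3) < 0)
    (f3 f4 : ℝ → ℝ) (hf3 : MonotoneOn f3 (Set.Ici 0)) (hf4 : MonotoneOn f4 (Set.Ici 0))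
    (hf30 : f3 0 = 0) (hf40 : f4 0 = 0)
    (hf3m : ∀ t ≥ (0:ℝ), f3 t ∈ Set.Icc (0:ℝ) 1) (hf4m : ∀ t ≥ (0:ℝ), f4 t ∈ Set.Icc (0:ℝ) 1)
    (R3 R4 : ℝ → Pt)
    (hR3 : ∀ t, R3 t = r3 + f3 t • (p3 - r3)) (hR4 : ∀ t, R4 t = r4 + f4 t • (p4 - r4))
    (hx : x ∉ thinHexSet r3 r4 ∨ x ∈ beaconSet r3 r4) :
    ∀ t > (0:ℝ), (R3 t, R4 t) ≠ (r3, r4) → x ∉ thinHexSet (R3 t) (R4 t) := by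
  intro t ht hne hmem
  have h3 : r3 - g ≠ 0 := sub_ne_zero.mpr h3g
  have h4 : r4 - g ≠ 0 := sub_ne_zero.mpr h4g
  set a := ‖r3 - g‖ with hadef
  set b := ‖r4 - g‖ with hbdef
  have ha : 0 < a := norm_pos_iff.mpr h3
  have hb : 0 < b := norm_pos_iff.mpr h4
  set p : Pt := a⁻¹ • (r3 - g) with hpdef
  set q : Pt := b⁻¹ • (r4 - g) with hqdef
  have hinner_co : ∀ u v : Pt, (inner ℝ u v : ℝ) = u 0 * v 0 + u 1 * v 1 := by
    intro u v
    simp [PiLp.inner_apply, Fin.sum_univ_two, RCLike.inner_apply, starRingEnd_apply]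
    ring
  have hip : (inner ℝ p p : ℝ) = 1 := by
    rw [hpdef, real_inner_smul_left, real_inner_smul_right, real_inner_self_eq_norm_sq]
    rw [← hadef]; field_simp
  have hiq : (inner ℝ q q : ℝ) = 1 := by
    rw [hqdef, real_inner_smul_left, real_inner_smul_right, real_inner_self_eq_norm_sq]
    rw [← hbdef]; field_simp
  have hipq : (inner ℝ p q : ℝ) = 0 := by
    have h0 : (inner ℝ (r3 - g) (r4 - g) : ℝ) = 0 := by
      have h' := hperp
      rw [show g - r3 = -(r3 - g) by abel, show g - r4 = -(r4 - g) by abel, inner_neg_neg] at h'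
      exact h'
    rw [hpdef, hqdef, real_inner_smul_left, real_inner_smul_right, h0]
    ring
  have hpn : p 0 ^ 2 + p 1 ^ 2 = 1 := by
    rw [hinner_co] at hip; linear_combination hip
  have hqn : q 0 ^ 2 + q 1 ^ 2 = 1 := by
    rw [hinner_co] at hiq; linear_combination hiq
  have hpqc : p 0 * q 0 + p 1 * q 1 = 0 := by
    rw [hinner_co] at hipq; linear_combination hipq
  have e0 : q 0 ^ 2 = p 1 ^ 2 := by
    linear_combination (-(q 0 ^ 2)) * hpn + p 1 ^ 2 * hqn + (p 0 * q 0 - p 1 * q 1) * hpqc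
  have e1 : q 1 ^ 2 = p 0 ^ 2 := by
    linear_combination (-(q 1 ^ 2)) * hpn + p 0 ^ 2 * hqn + (p 1 * q 1 - p 0 * q 0) * hpqc
  have e2 : p 0 * p 1 + q 0 * q 1 = 0 := by
    have h2 : (p 0 * p 1 + q 0 * q 1) ^ 2 = 0 := by
      linear_combination (q 1 ^ 2 - p 0 ^ 2) * e0 + (p 0 * q 0 + p 1 * q 1) * hpqc
    have h3' := sq_eq_zero_iff.mp h2
    linarith [h3']
  set ε := p 0 * q 1 - p 1 * q 0 with hεdef
  have hi1 : ε * q 0 = -(p 1) := by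
    rw [hεdef]; linear_combination p 0 * e2 - p 1 * e0 - p 1 * hpn
  have hi2 : ε * p 0 = q 1 := by
    rw [hεdef]; linear_combination q 1 * hpn - p 1 * hpqc
  have hi3 : ε * q 1 = p 0 := by
    rw [hεdef]; linear_combination p 0 * e1 + p 0 * hpn - p 1 * e2
  have hi4 : ε * p 1 = -(q 0) := by
    rw [hεdef]; linear_combination p 0 * hpqc - q 0 * hpn
  have hε2 : ε ^ 2 = 1 := by
    linear_combination p 0 * hi3 - p 1 * hi1 + hpn
  have hεcase : ε = 1 ∨ ε = -1 := by
    rcases mul_eq_zero.mp (show (ε - 1) * (ε + 1) = 0 by linear_combination hε2) with h | h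
    · exact Or.inl (by linarith)
    · exact Or.inr (by linarith)
  -- the linear isometry sending the standard frame to (p, q), and the affine map T
  set M : Pt →ₗ[ℝ] Pt := {
    toFun := fun y => y 0 • p + y 1 • q
    map_add' := by
      intro y z
      simp only [PiLp.add_apply, add_smul]
      abel
    map_smul' := by
      intro r y
      simp only [PiLp.smul_apply, smul_eq_mul, RingHom.id_apply, mul_smul, smul_add] } with hMdef
  set T : Pt →ᵃ[ℝ] Pt := AffineMap.mk' (fun y => g + M y) M 0 (by
    intro y
    simp only [vsub_eq_sub, sub_zero, vadd_eq_add, map_zero]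
    abel) with hTdef
  have hT : ∀ y, T y = g + M y := fun y => rfl
  have hM0 : ∀ y : Pt, M y 0 = y 0 * p 0 + y 1 * q 0 := by
    intro y
    show (y 0 • p + y 1 • q) 0 = _
    simp only [PiLp.add_apply, PiLp.smul_apply, smul_eq_mul]
  have hM1 : ∀ y : Pt, M y 1 = y 0 * p 1 + y 1 * q 1 := by
    intro y
    show (y 0 • p + y 1 • q) 1 = _
    simp only [PiLp.add_apply, PiLp.smul_apply, smul_eq_mul]
  have hTdiff : ∀ y z : Pt, T y - T z = M (y - z) := by
    intro y z
    rw [hT, hT, map_sub]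
    abel
  have hTadd : ∀ y d : Pt, T (y + d) = T y + M d := by
    intro y d
    rw [hT, hT, map_add]
    abel
  have hTsub : ∀ y d : Pt, T (y - d) = T y - M d := by
    intro y d
    rw [hT, hT, map_sub]
    abel
  have hcrossM : ∀ y z : Pt, cross2 (M y) (M z) = ε * cross2 y z := by
    intro y z
    simp only [cross2, hM0, hM1, hεdef]
    ring
  have hrotM : ∀ y : Pt, M (rot90 y) = ε • rot90 (M y) := by
    intro y
    apply PiLp.ext
    rw [Fin.forall_fin_two]
    constructor
    · simp only [hM0, hM1, rot90, PiLp.toLp_apply, PiLp.smul_apply, smul_eq_mul, Matrix.cons_val_zero,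
        Matrix.cons_val_one, Matrix.head_cons]
      linear_combination (y 0) * hi4 + (y 1) * hi3
    · simp only [hM0, hM1, rot90, PiLp.toLp_apply, PiLp.smul_apply, smul_eq_mul, Matrix.cons_val_zero,
        Matrix.cons_val_one, Matrix.head_cons]
      linear_combination (-(y 0)) * hi2 + (-(y 1)) * hi1
  -- image of the beacon set
  have hbimg : ∀ y z : Pt, T '' beaconSet y z = beaconSet (T y) (T z) := by
    intro y z
    have h1p : T (y + (4:ℝ)⁻¹ • (Real.cos (5*π/36) • (z - y) + Real.sin (5*π/36) • rot90 (z - y)))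
        = T y + (4:ℝ)⁻¹ • (Real.cos (5*π/36) • (T z - T y)
            + (Real.sin (5*π/36) * ε) • rot90 (T z - T y)) := by
      rw [hTadd, map_smul, map_add, map_smul, map_smul, hrotM, smul_smul, hTdiff]
    have h1m : T (y + (4:ℝ)⁻¹ • (Real.cos (5*π/36) • (z - y) - Real.sin (5*π/36) • rot90 (z - y)))
        = T y + (4:ℝ)⁻¹ • (Real.cos (5*π/36) • (T z - T y)
            - (Real.sin (5*π/36) * ε) • rot90 (T z - T y)) := by
      rw [hTadd, map_smul, map_sub, map_smul, map_smul, hrotM, smul_smul, hTdiff]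
    have h2p : T (z - (4:ℝ)⁻¹ • (Real.cos (5*π/36) • (z - y) + Real.sin (5*π/36) • rot90 (z - y)))
        = T z - (4:ℝ)⁻¹ • (Real.cos (5*π/36) • (T z - T y)
            + (Real.sin (5*π/36) * ε) • rot90 (T z - T y)) := by
      rw [hTsub, map_smul, map_add, map_smul, map_smul, hrotM, smul_smul, hTdiff]
    have h2m : T (z - (4:ℝ)⁻¹ • (Real.cos (5*π/36) • (z - y) - Real.sin (5*π/36) • rot90 (z - y)))
        = T z - (4:ℝ)⁻¹ • (Real.cos (5*π/36) • (T z - T y)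
            - (Real.sin (5*π/36) * ε) • rot90 (T z - T y)) := by
      rw [hTsub, map_smul, map_sub, map_smul, map_smul, hrotM, smul_smul, hTdiff]
    have himg : T '' beaconSet y z = {
        T (y + (4:ℝ)⁻¹ • (Real.cos (5*π/36) • (z - y) + Real.sin (5*π/36) • rot90 (z - y))),
        T (y + (4:ℝ)⁻¹ • (Real.cos (5*π/36) • (z - y) - Real.sin (5*π/36) • rot90 (z - y))),
        T (z - (4:ℝ)⁻¹ • (Real.cos (5*π/36) • (z - y) + Real.sin (5*π/36) • rot90 (z - y))),
        T (z - (4:ℝ)⁻¹ • (Real.cos (5*π/36) • (z - y) - Real.sin (5*π/36) • rot90 (z - y)))} := by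
      simp only [beaconSet, Set.image_insert_eq, Set.image_singleton]
    rw [himg, h1p, h1m, h2p, h2m]
    rcases hεcase with hε | hε
    · rw [hε]
      simp only [mul_one]
      rfl
    · rw [hε]
      simp only [mul_neg_one, neg_smul, sub_neg_eq_add, ← sub_eq_add_neg]
      ext w
      simp only [beaconSet, Set.mem_insert_iff, Set.mem_singleton_iff]
      tauto
  have hhex : ∀ y z : Pt, T '' thinHexSet y z = thinHexSet (T y) (T z) := by
    intro y z
    simp only [thinHexSet]
    rw [AffineMap.image_convexHull, Set.image_insert_eq, Set.image_insert_eq, hbimg]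
  have hTinj : ∀ y z : Pt, T y = T z → y = z := by
    intro y z h
    have h0 : T y 0 = T z 0 := by rw [h]
    have h1 : T y 1 = T z 1 := by rw [h]
    simp only [hT, PiLp.add_apply, hM0, hM1] at h0 h1
    apply PiLp.ext
    rw [Fin.forall_fin_two]
    constructor
    · linear_combination p 0 * h0 + p 1 * h1 - (y 0 - z 0) * hpn - (y 1 - z 1) * hpqc
    · linear_combination q 0 * h0 + q 1 * h1 - (y 1 - z 1) * hqn - (y 0 - z 0) * hpqc
  -- extract motion parameters
  obtain ⟨c1, c2, hc1n, hc2n, hc12, hp3e⟩ := hp3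
  obtain ⟨d1, d2, hd1n, hd2n, hd12, hp4e⟩ := hp4
  set σ := f3 t * c2 with hσdef
  set ρ := f4 t * d2 with hρdef
  obtain ⟨hf30', hf31'⟩ := hf3m t ht.le
  obtain ⟨hf40', hf41'⟩ := hf4m t ht.le
  have hσ0 : 0 ≤ σ := mul_nonneg hf30' hc2n
  have hρ0 : 0 ≤ ρ := mul_nonneg hf40' hd2n
  have hσ1 : σ ≤ 1 := by
    have h2' : 0 ≤ f3 t * (1 - c2) := mul_nonneg hf30' (by linarith)
    have h3' : f3 t * (1 - c2) = f3 t - f3 t * c2 := by ring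
    rw [hσdef]
    linarith [h2', h3']
  have hρ1 : ρ ≤ 1 := by
    have h2' : 0 ≤ f4 t * (1 - d2) := mul_nonneg hf40' (by linarith)
    have h3' : f4 t * (1 - d2) = f4 t - f4 t * d2 := by ring
    rw [hρdef]
    linarith [h2', h3']
  have hR3c : ∀ i, R3 t i = r3 i + σ * (g i - r3 i) := by
    intro i
    have hp3i : p3 i = c1 * r3 i + c2 * g i := by
      rw [← hp3e]
      simp only [PiLp.add_apply, PiLp.smul_apply, smul_eq_mul]
    rw [hR3 t]
    simp only [PiLp.add_apply, PiLp.smul_apply, PiLp.sub_apply, smul_eq_mul, hp3i, hσdef]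
    linear_combination (f3 t * r3 i) * hc12
  have hR4c : ∀ i, R4 t i = r4 i + ρ * (g i - r4 i) := by
    intro i
    have hp4i : p4 i = d1 * r4 i + d2 * g i := by
      rw [← hp4e]
      simp only [PiLp.add_apply, PiLp.smul_apply, smul_eq_mul]
    rw [hR4 t]
    simp only [PiLp.add_apply, PiLp.smul_apply, PiLp.sub_apply, smul_eq_mul, hp4i, hρdef]
    linear_combination (f4 t * r4 i) * hd12
  -- coordinates of p and q
  have hpco0 : p 0 = a⁻¹ * (r3 0 - g 0) := by
    rw [hpdef]; simp only [PiLp.smul_apply, PiLp.sub_apply, smul_eq_mul]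
  have hpco1 : p 1 = a⁻¹ * (r3 1 - g 1) := by
    rw [hpdef]; simp only [PiLp.smul_apply, PiLp.sub_apply, smul_eq_mul]
  have hqco0 : q 0 = b⁻¹ * (r4 0 - g 0) := by
    rw [hqdef]; simp only [PiLp.smul_apply, PiLp.sub_apply, smul_eq_mul]
  have hqco1 : q 1 = b⁻¹ * (r4 1 - g 1) := by
    rw [hqdef]; simp only [PiLp.smul_apply, PiLp.sub_apply, smul_eq_mul]
  have hTr3 : T (ptm a 0) = r3 := by
    apply PiLp.ext
    rw [Fin.forall_fin_two]
    constructor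
    · simp only [hT, PiLp.add_apply, hM0, ptm_zero, ptm_one, hpco0, hqco0]
      field_simp
      ring
    · simp only [hT, PiLp.add_apply, hM1, ptm_zero, ptm_one, hpco1, hqco1]
      field_simp
      ring
  have hTr4 : T (ptm 0 b) = r4 := by
    apply PiLp.ext
    rw [Fin.forall_fin_two]
    constructor
    · simp only [hT, PiLp.add_apply, hM0, ptm_zero, ptm_one, hpco0, hqco0]
      field_simp
      ring
    · simp only [hT, PiLp.add_apply, hM1, ptm_zero, ptm_one, hpco1, hqco1]
      field_simp
      ring
  have hTg : T (ptm 0 0) = g := by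
    apply PiLp.ext
    rw [Fin.forall_fin_two]
    constructor
    · simp only [hT, PiLp.add_apply, hM0, ptm_zero, ptm_one]
      ring
    · simp only [hT, PiLp.add_apply, hM1, ptm_zero, ptm_one]
      ring
  have hTu : T (ptm ((1 - σ) * a) 0) = R3 t := by
    apply PiLp.ext
    rw [Fin.forall_fin_two]
    constructor
    · simp only [hT, PiLp.add_apply, hM0, ptm_zero, ptm_one, hpco0, hqco0, hR3c]
      field_simp
      ring
    · simp only [hT, PiLp.add_apply, hM1, ptm_zero, ptm_one, hpco1, hqco1, hR3c]
      field_simp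
      ring
  have hTv : T (ptm 0 ((1 - ρ) * b)) = R4 t := by
    apply PiLp.ext
    rw [Fin.forall_fin_two]
    constructor
    · simp only [hT, PiLp.add_apply, hM0, ptm_zero, ptm_one, hpco0, hqco0, hR4c]
      field_simp
      ring
    · simp only [hT, PiLp.add_apply, hM1, ptm_zero, ptm_one, hpco1, hqco1, hR4c]
      field_simp
      ring
  set x' : Pt := ptm ((x 0 - g 0) * p 0 + (x 1 - g 1) * p 1)
      ((x 0 - g 0) * q 0 + (x 1 - g 1) * q 1) with hx'def
  have hTx : T x' = x := by
    apply PiLp.ext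
    rw [Fin.forall_fin_two]
    constructor
    · simp only [hT, PiLp.add_apply, hM0, hx'def, ptm_zero, ptm_one]
      linear_combination (x 0 - g 0) * e0 + (x 0 - g 0) * hpn + (x 1 - g 1) * e2
    · simp only [hT, PiLp.add_apply, hM1, hx'def, ptm_zero, ptm_one]
      linear_combination (x 0 - g 0) * e2 + (x 1 - g 1) * e1 + (x 1 - g 1) * hpn
  -- transported hypotheses
  have hY : cross2 (ptm 0 0 - ptm a 0) (ptm 0 b - ptm a 0) = -(a * b) := by
    simp only [cross2, PiLp.sub_apply, ptm_zero, ptm_one]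
    ring
  have hc1x : cross2 (x - r3) (r4 - r3) = ε * cross2 (x' - ptm a 0) (ptm 0 b - ptm a 0) := by
    rw [← hTx, ← hTr3, ← hTr4, hTdiff, hTdiff, hcrossM]
  have hc2x : cross2 (g - r3) (r4 - r3)
      = ε * cross2 (ptm 0 0 - ptm a 0) (ptm 0 b - ptm a 0) := by
    rw [← hTg, ← hTr3, ← hTr4, hTdiff, hTdiff, hcrossM]
  have hprod : cross2 (x - r3) (r4 - r3) * cross2 (g - r3) (r4 - r3)
      = -(a * b) * cross2 (x' - ptm a 0) (ptm 0 b - ptm a 0) := by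
    rw [hc1x, hc2x, hY]
    linear_combination (-(a * b) * cross2 (x' - ptm a 0) (ptm 0 b - ptm a 0)) * hε2
  have hL' : 0 < cross2 (x' - ptm a 0) (ptm 0 b - ptm a 0) := by
    by_contra hXle
    push_neg at hXle
    rw [hprod] at hside
    have hab' : 0 < a * b := mul_pos ha hb
    have h0' : 0 ≤ a * b * (-(cross2 (x' - ptm a 0) (ptm 0 b - ptm a 0))) :=
      mul_nonneg hab'.le (neg_nonneg.mpr hXle)
    have heq : -(a * b) * cross2 (x' - ptm a 0) (ptm 0 b - ptm a 0)
        = a * b * (-(cross2 (x' - ptm a 0) (ptm 0 b - ptm a 0))) := by ring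
    linarith
  have hst : 0 < σ ∨ 0 < ρ := by
    by_contra hcon
    push_neg at hcon
    obtain ⟨h1', h2'⟩ := hcon
    have hσz : σ = 0 := le_antisymm h1' hσ0
    have hρz : ρ = 0 := le_antisymm h2' hρ0
    apply hne
    have e3 : R3 t = r3 := by
      apply PiLp.ext
      rw [Fin.forall_fin_two]
      constructor
      · rw [hR3c 0, hσz]; ring
      · rw [hR3c 1, hσz]; ring
    have e4 : R4 t = r4 := by
      apply PiLp.ext
      rw [Fin.forall_fin_two]
      constructor
      · rw [hR4c 0, hρz]; ring
      · rw [hR4c 1, hρz]; ring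
    rw [e3, e4]
  have hx'h : x' ∉ thinHexSet (ptm a 0) (ptm 0 b) ∨ x' ∈ beaconSet (ptm a 0) (ptm 0 b) := by
    rcases hx with hout | hbeac
    · left
      intro hmm
      exact hout (by rw [← hTr3, ← hTr4, ← hhex]; exact ⟨x', hmm, hTx⟩)
    · right
      rw [← hTr3, ← hTr4, ← hbimg] at hbeac
      obtain ⟨y, hy, hTy⟩ := hbeac
      rwa [hTinj y x' (hTy.trans hTx.symm)] at hy
  have hcore := core a b σ ρ x' ha hb hσ0 hσ1 hρ0 hρ1 hst hL' hx'h
  rw [← hTu, ← hTv, ← hhex] at hmem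
  obtain ⟨y, hy, hTy⟩ := hmem
  rw [hTinj y x' (hTy.trans hTx.symm)] at hy
  exact hcore hy

end
end

section
/- Let r3 and r4 be convergent robots with perpendicular guidelines meeting at g, with targets p3 ∈ [r3, g] and p4 ∈ [r4, g]. As r3 moves toward p3 and r4 moves toward p4 (each monotonically along its guideline), the length |r3 r4| is non-increasing, and the line through r3 and r4 rotates monotonically (the signed angle of the direction vector r4 − r3 changes monotonically). -/
open EuclideanGeometry Real
open scoped RealInnerProductSpace

noncomputable section

/-- As two convergent robots with perpendicular guidelines move toward their targets at
proportional rates, their mutual distance is non-increasing and the line through them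
rotates monotonically. -/
theorem stmt18 (r3 r4 p3 p4 g : Pt)
    (hperp : inner ℝ (g - r3) (g - r4) = (0:ℝ))
    (hp3 : p3 ∈ segment ℝ r3 g) (hp4 : p4 ∈ segment ℝ r4 g)
    (R3 R4 : ℝ → Pt)
    (hR3 : ∀ t, R3 t = r3 + t • (p3 - r3)) (hR4 : ∀ t, R4 t = r4 + t • (p4 - r4))
    (hd3 : AntitoneOn (fun t => dist (R3 t) g) (Set.Icc 0 1))
    (hd4 : AntitoneOn (fun t => dist (R4 t) g) (Set.Icc 0 1)) :
    AntitoneOn (fun t => dist (R3 t) (R4 t)) (Set.Icc 0 1) ∧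
    ((∀ s ∈ Set.Icc (0:ℝ) 1, ∀ t ∈ Set.Icc (0:ℝ) 1, s ≤ t →
        0 ≤ cross2 (R4 s - R3 s) (R4 t - R3 t)) ∨
     (∀ s ∈ Set.Icc (0:ℝ) 1, ∀ t ∈ Set.Icc (0:ℝ) 1, s ≤ t →
        cross2 (R4 s - R3 s) (R4 t - R3 t) ≤ 0)) := by
  rw [segment_eq_image'] at hp3 hp4
  obtain ⟨a, ⟨ha0, ha1⟩, hpa⟩ := hp3
  obtain ⟨b, ⟨hb0, hb1⟩, hpb⟩ := hp4
  simp only at hpa hpb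
  have hR3' : ∀ t, R3 t = g - (1 - t*a) • (g - r3) := by
    intro t; rw [hR3, ← hpa]; module
  have hR4' : ∀ t, R4 t = g - (1 - t*b) • (g - r4) := by
    intro t; rw [hR4, ← hpb]; module
  have hcomp : ∀ t (i : Fin 2),
      R4 t i - R3 t i = (1 - t*a) * (g i - r3 i) - (1 - t*b) * (g i - r4 i) := by
    intro t i
    rw [hR3' t, hR4' t]
    simp only [PiLp.sub_apply, PiLp.smul_apply, smul_eq_mul]
    ring
  have hperp' : (g 0 - r3 0) * (g 0 - r4 0) + (g 1 - r3 1) * (g 1 - r4 1) = 0 := by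
    rw [PiLp.inner_apply, Fin.sum_univ_two] at hperp
    simp [PiLp.sub_apply] at hperp
    linarith
  have hdist2 : ∀ t, dist (R3 t) (R4 t) =
      Real.sqrt ((1-t*a)^2 * ((g 0 - r3 0)^2+(g 1 - r3 1)^2)
        + (1-t*b)^2 * ((g 0 - r4 0)^2+(g 1 - r4 1)^2)) := by
    intro t
    rw [EuclideanSpace.dist_eq, Fin.sum_univ_two]
    congr 1
    have h0 := hcomp t 0
    have h1 := hcomp t 1
    have e0 : R3 t 0 - R4 t 0 = -((1 - t*a) * (g 0 - r3 0) - (1 - t*b) * (g 0 - r4 0)) := by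
      rw [← h0]; ring
    have e1 : R3 t 1 - R4 t 1 = -((1 - t*a) * (g 1 - r3 1) - (1 - t*b) * (g 1 - r4 1)) := by
      rw [← h1]; ring
    simp only [Real.dist_eq]
    rw [sq_abs, sq_abs, e0, e1]
    linear_combination (-(2*(1-t*a)*(1-t*b))) * hperp'
  constructor
  · intro s hs t ht hst
    simp only
    rw [hdist2 s, hdist2 t]
    apply Real.sqrt_le_sqrt
    have hsum : (s + t) * a ≤ s + t := mul_le_of_le_one_right (by linarith [hs.1, ht.1]) ha1
    have hsumb : (s + t) * b ≤ s + t := mul_le_of_le_one_right (by linarith [hs.1, ht.1]) hb1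
    have keyA : 0 ≤ (t - s) * a * (2 - (s + t) * a) :=
      mul_nonneg (mul_nonneg (by linarith) ha0) (by linarith [hs.2, ht.2])
    have keyB : 0 ≤ (t - s) * b * (2 - (s + t) * b) :=
      mul_nonneg (mul_nonneg (by linarith) hb0) (by linarith [hs.2, ht.2])
    have hA : (1 - t*a)^2 ≤ (1 - s*a)^2 := by nlinarith [keyA]
    have hB : (1 - t*b)^2 ≤ (1 - s*b)^2 := by nlinarith [keyB]
    have hU : (0:ℝ) ≤ (g 0 - r3 0)^2+(g 1 - r3 1)^2 := by positivity
    have hV : (0:ℝ) ≤ (g 0 - r4 0)^2+(g 1 - r4 1)^2 := by positivity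
    nlinarith [mul_nonneg (sub_nonneg.2 hA) hU, mul_nonneg (sub_nonneg.2 hB) hV]
  · have hcross : ∀ s t, cross2 (R4 s - R3 s) (R4 t - R3 t) =
        (t - s) * ((b - a) * ((g 0 - r3 0)*(g 1 - r4 1) - (g 1 - r3 1)*(g 0 - r4 0))) := by
      intro s t
      have h0s := hcomp s 0; have h1s := hcomp s 1
      have h0t := hcomp t 0; have h1t := hcomp t 1
      simp only [cross2, PiLp.sub_apply]
      rw [h0s, h1s, h0t, h1t]; ring
    rcases le_or_gt 0 ((b - a) * ((g 0 - r3 0)*(g 1 - r4 1) - (g 1 - r3 1)*(g 0 - r4 0)))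
      with h | h
    · left
      intro s hs t ht hst
      rw [hcross]
      exact mul_nonneg (by linarith) h
    · right
      intro s hs t ht hst
      rw [hcross]
      exact mul_nonpos_of_nonneg_of_nonpos (by linarith) h.le


end
end
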